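/- arXiv:0803.1541 — 6 statements merged into one kernel-verified Lean document; each statement's English description precedes it below -/
import Mathlib

section
/- Let (Y, d_Y) be a metric space. Then the function ρ((p,s),(q,t)) = 2·log((d_Y(p,q) + max(s,t))/√(s·t)) is a metric on Y × (0, ∞): it is nonnegative, symmetric, satisfies the triangle inequality ρ(x,z) ≤ ρ(x,y) + ρ(y,z) for all x,y,z ∈ Y × (0,∞), and ρ(x,y) = 0 if and only if x = y. -/
open Set

/-- The Balogh–Schramm distance on `Y × (0, ∞)`:
`ρ((p,s),(q,t)) = 2·log((d_Y(p,q) + max(s,t))/√(s·t))`. -/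
noncomputable def BS {Y : Type*} [MetricSpace Y] (x y : Y × ℝ) : ℝ :=
  2 * Real.log ((dist x.1 y.1 + max x.2 y.2) / Real.sqrt (x.2 * y.2))

private lemma sqrt_le_max {s t : ℝ} (hs : 0 < s) (ht : 0 < t) :
    Real.sqrt (s * t) ≤ max s t := by
  have h : s * t ≤ max s t * max s t :=
    mul_le_mul (le_max_left s t) (le_max_right s t) ht.le
      (le_trans hs.le (le_max_left s t))
  calc Real.sqrt (s * t) ≤ Real.sqrt (max s t * max s t) := Real.sqrt_le_sqrt h
    _ = max s t := by
        rw [Real.sqrt_mul_self (le_trans hs.le (le_max_left s t))]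

private lemma key_ineq {d1 d2 d3 s t u : ℝ} (hd1 : 0 ≤ d1) (hd2 : 0 ≤ d2)
    (hd3 : d3 ≤ d1 + d2) (hs : 0 < s) (ht : 0 < t) (hu : 0 < u) :
    t * (d3 + max s u) ≤ (d1 + max s t) * (d2 + max t u) := by
  rcases le_total s t with h1 | h1 <;> rcases le_total t u with h2 | h2 <;>
    rcases le_total s u with h3 | h3 <;>
    simp_all [max_def] <;> nlinarith

/-- the Balogh–Schramm distance is a metric on Y × (0,∞):
nonnegative, symmetric, triangle inequality, and vanishing exactly on the diagonal. -/
theorem stmt0 {Y : Type*} [MetricSpace Y] :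
    (∀ x y : Y × ℝ, 0 < x.2 → 0 < y.2 → 0 ≤ BS x y) ∧
    (∀ x y : Y × ℝ, 0 < x.2 → 0 < y.2 → BS x y = BS y x) ∧
    (∀ x y z : Y × ℝ, 0 < x.2 → 0 < y.2 → 0 < z.2 → BS x z ≤ BS x y + BS y z) ∧
    (∀ x y : Y × ℝ, 0 < x.2 → 0 < y.2 → (BS x y = 0 ↔ x = y)) := by
  have hone : ∀ (x y : Y × ℝ), 0 < x.2 → 0 < y.2 →
      1 ≤ (dist x.1 y.1 + max x.2 y.2) / Real.sqrt (x.2 * y.2) := by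
    intro x y hx hy
    have hsq : 0 < Real.sqrt (x.2 * y.2) := Real.sqrt_pos.2 (mul_pos hx hy)
    rw [le_div_iff₀ hsq, one_mul]
    exact le_trans (sqrt_le_max hx hy) (le_add_of_nonneg_left dist_nonneg)
  refine ⟨?_, ?_, ?_, ?_⟩
  · intro x y hx hy
    have := hone x y hx hy
    have : 0 ≤ Real.log ((dist x.1 y.1 + max x.2 y.2) / Real.sqrt (x.2 * y.2)) :=
      Real.log_nonneg this
    unfold BS; linarith
  · intro x y _ _
    unfold BS
    rw [dist_comm, max_comm, mul_comm x.2 y.2]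
  · intro x y z hx hy hz
    obtain ⟨p, s⟩ := x; obtain ⟨q, t⟩ := y; obtain ⟨r, u⟩ := z
    simp only at hx hy hz
    have h1 := hone (p, s) (q, t) hx hy
    have h2 := hone (q, t) (r, u) hy hz
    simp only [BS]
    rw [← mul_add, ← Real.log_mul (by linarith) (by linarith)]
    have hAB : (dist p r + max s u) / Real.sqrt (s * u) ≤
        (dist p q + max s t) / Real.sqrt (s * t) *
        ((dist q r + max t u) / Real.sqrt (t * u)) := by
      rw [div_mul_div_comm]
      have hden : Real.sqrt (s * t) * Real.sqrt (t * u) = t * Real.sqrt (s * u) := by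
        rw [← Real.sqrt_mul (by positivity)]
        rw [show s * t * (t * u) = t ^ 2 * (s * u) by ring,
          Real.sqrt_mul (by positivity), Real.sqrt_sq hy.le]
      rw [hden, div_le_div_iff₀ (by positivity) (by positivity)]
      have := key_ineq (dist_nonneg (x := p) (y := q)) (dist_nonneg (x := q) (y := r))
        (dist_triangle p q r) hx hy hz
      calc (dist p r + max s u) * (t * Real.sqrt (s * u))
          = (t * (dist p r + max s u)) * Real.sqrt (s * u) := by ring
        _ ≤ ((dist p q + max s t) * (dist q r + max t u)) * Real.sqrt (s * u) := by
            apply mul_le_mul_of_nonneg_right this (Real.sqrt_nonneg _)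
    have hlog := Real.log_le_log (by
      have hsq : (0:ℝ) < Real.sqrt (s * u) := Real.sqrt_pos.2 (mul_pos hx hz)
      positivity) hAB
    linarith
  · intro x y hx hy
    constructor
    · intro h
      obtain ⟨p, s⟩ := x; obtain ⟨q, t⟩ := y
      simp only at hx hy
      simp only [BS, mul_eq_zero, OfNat.ofNat_ne_zero, false_or] at h
      have hsq : (0:ℝ) < Real.sqrt (s * t) := Real.sqrt_pos.2 (mul_pos hx hy)
      have hpos : 0 < (dist p q + max s t) / Real.sqrt (s * t) := by
        have := hone (p, s) (q, t) hx hy; linarith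
      have heq1 : (dist p q + max s t) / Real.sqrt (s * t) = 1 := by
        have := Real.log_eq_zero.mp h
        rcases this with h' | h' | h'
        · exact absurd h' (ne_of_gt hpos)
        · exact h'
        · linarith
      have heq : dist p q + max s t = Real.sqrt (s * t) := by
        exact (div_eq_one_iff_eq (ne_of_gt hsq)).mp heq1
      have hle := sqrt_le_max hx hy
      have hd : dist p q = 0 := by linarith [dist_nonneg (x := p) (y := q)]
      have hmax : max s t = Real.sqrt (s * t) := by linarith
      have hsq2 : max s t ^ 2 = s * t := by
        rw [hmax, Real.sq_sqrt (by positivity)]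
      have hst : s = t := by
        rcases le_total s t with h' | h'
        · rw [max_eq_right h'] at hsq2; nlinarith
        · rw [max_eq_left h'] at hsq2; nlinarith
      exact Prod.ext (dist_eq_zero.mp hd) hst
    · intro h
      subst h
      simp only [BS, dist_self, zero_add, max_self, mul_eq_zero]
      right
      rw [Real.sqrt_mul_self hx.le, div_self (ne_of_gt hx), Real.log_one]
end

section
/- Let (Y, d_Y) be a metric space and ρ the Balogh–Schramm distance on Y × (0, ∞). Then ρ satisfies the Gromov four-point condition with δ = log 4: for all x₁, x₂, x₃, x₄ ∈ Y × (0, ∞), ρ(x₁,x₂) + ρ(x₃,x₄) ≤ max(ρ(x₁,x₃) + ρ(x₂,x₄), ρ(x₁,x₄) + ρ(x₂,x₃)) + 2·log 4. -/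
open Set

private lemma key_ineq_s1 (A B C E u v : ℝ) (hA : 0 ≤ A) (hB : 0 ≤ B) (hC : 0 ≤ C) (hE : 0 ≤ E)
    (hv : 0 ≤ v)
    (hu1 : u ≤ A + E) (hu2 : u ≤ B + C) (hv1 : v ≤ A + C) (hv2 : v ≤ B + E) :
    u * v ≤ 4 * max (A * B) (C * E) := by
  have hM1 : A*B ≤ max (A*B) (C*E) := le_max_left _ _
  have hM2 : C*E ≤ max (A*B) (C*E) := le_max_right _ _
  rcases le_total A B with h1 | h1 <;> rcases le_total C E with h2 | h2
  · rcases le_total B E with h3 | h3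
    · have h : u*v ≤ (B+C)*(A+C) := mul_le_mul hu2 hv1 hv (by linarith)
      nlinarith [mul_nonneg (sub_nonneg.2 (h1.trans h3)) hC,
        mul_nonneg (sub_nonneg.2 h3) hC, mul_nonneg (sub_nonneg.2 h2) hC]
    · have h : u*v ≤ (A+E)*(A+C) := mul_le_mul hu1 hv1 hv (by linarith)
      nlinarith [mul_nonneg (sub_nonneg.2 h1) hA,
        mul_nonneg (sub_nonneg.2 (h2.trans h3)) hA, mul_nonneg (sub_nonneg.2 h3) hA]
  · rcases le_total B C with h3 | h3
    · have h : u*v ≤ (A+E)*(B+E) := mul_le_mul hu1 hv2 hv (by linarith)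
      nlinarith [mul_nonneg (sub_nonneg.2 (h1.trans h3)) hE,
        mul_nonneg (sub_nonneg.2 h3) hE, mul_nonneg (sub_nonneg.2 h2) hE]
    · have h : u*v ≤ (A+E)*(A+C) := mul_le_mul hu1 hv1 hv (by linarith)
      nlinarith [mul_nonneg (sub_nonneg.2 h1) hA,
        mul_nonneg (sub_nonneg.2 h3) hA, mul_nonneg (sub_nonneg.2 (h2.trans h3)) hA]
  · rcases le_total A E with h3 | h3
    · have h : u*v ≤ (B+C)*(A+C) := mul_le_mul hu2 hv1 hv (by linarith)
      nlinarith [mul_nonneg (sub_nonneg.2 h3) hC,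
        mul_nonneg (sub_nonneg.2 (h1.trans h3)) hC, mul_nonneg (sub_nonneg.2 h2) hC]
    · have h : u*v ≤ (B+C)*(B+E) := mul_le_mul hu2 hv2 hv (by linarith)
      nlinarith [mul_nonneg (sub_nonneg.2 h1) hB,
        mul_nonneg (sub_nonneg.2 h3) hB, mul_nonneg (sub_nonneg.2 (h2.trans h3)) hB]
  · rcases le_total A C with h3 | h3
    · have h : u*v ≤ (A+E)*(B+E) := mul_le_mul hu1 hv2 hv (by linarith)
      nlinarith [mul_nonneg (sub_nonneg.2 h3) hE,
        mul_nonneg (sub_nonneg.2 (h1.trans h3)) hE, mul_nonneg (sub_nonneg.2 h2) hE]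
    · have h : u*v ≤ (B+C)*(B+E) := mul_le_mul hu2 hv2 hv (by linarith)
      nlinarith [mul_nonneg (sub_nonneg.2 h1) hB,
        mul_nonneg (sub_nonneg.2 h3) hB, mul_nonneg (sub_nonneg.2 (h2.trans h3)) hB]

private lemma Dtri {Y : Type*} [MetricSpace Y] (x y z : Y × ℝ) (hx : 0 ≤ x.2) (hy : 0 ≤ y.2) :
    dist x.1 y.1 + max x.2 y.2 ≤
      (dist x.1 z.1 + max x.2 z.2) + (dist y.1 z.1 + max y.2 z.2) := by
  have h1 := dist_triangle x.1 z.1 y.1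
  have h2 : dist z.1 y.1 = dist y.1 z.1 := dist_comm _ _
  have h3 : max x.2 y.2 ≤ max x.2 z.2 + max y.2 z.2 :=
    max_le (le_add_of_le_of_nonneg (le_max_left _ _) (hy.trans (le_max_left _ _)))
      (le_add_of_nonneg_of_le (hx.trans (le_max_left _ _)) (le_max_left _ _))
  linarith

/-- the Balogh–Schramm distance satisfies the Gromov four-point
condition with δ = log 4. -/
theorem stmt1 {Y : Type*} [MetricSpace Y] (x₁ x₂ x₃ x₄ : Y × ℝ)
    (h₁ : 0 < x₁.2) (h₂ : 0 < x₂.2) (h₃ : 0 < x₃.2) (h₄ : 0 < x₄.2) :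
    BS x₁ x₂ + BS x₃ x₄ ≤
      max (BS x₁ x₃ + BS x₂ x₄) (BS x₁ x₄ + BS x₂ x₃) + 2 * Real.log 4 := by
  have hd {a b : Y × ℝ} (ha : 0 < a.2) (hb : 0 < b.2) :
      0 < dist a.1 b.1 + max a.2 b.2 :=
    add_pos_of_nonneg_of_pos dist_nonneg (lt_max_of_lt_left ha)
  have eBS : ∀ a b : Y × ℝ, 0 < a.2 → 0 < b.2 →
      BS a b = 2 * Real.log (dist a.1 b.1 + max a.2 b.2) - Real.log a.2 - Real.log b.2 := by
    intro a b ha hb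
    rw [BS, Real.log_div (hd ha hb).ne' (Real.sqrt_ne_zero'.mpr (mul_pos ha hb)),
      Real.log_sqrt (mul_pos ha hb).le, Real.log_mul ha.ne' hb.ne']
    ring
  set D12 := dist x₁.1 x₂.1 + max x₁.2 x₂.2 with hD12
  set D34 := dist x₃.1 x₄.1 + max x₃.2 x₄.2 with hD34
  set D13 := dist x₁.1 x₃.1 + max x₁.2 x₃.2 with hD13
  set D24 := dist x₂.1 x₄.1 + max x₂.2 x₄.2 with hD24
  set D14 := dist x₁.1 x₄.1 + max x₁.2 x₄.2 with hD14
  set D23 := dist x₂.1 x₃.1 + max x₂.2 x₃.2 with hD23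
  have P12 : 0 < D12 := hd h₁ h₂
  have P34 : 0 < D34 := hd h₃ h₄
  have P13 : 0 < D13 := hd h₁ h₃
  have P24 : 0 < D24 := hd h₂ h₄
  have P14 : 0 < D14 := hd h₁ h₄
  have P23 : 0 < D23 := hd h₂ h₃
  have T1 : D12 ≤ D13 + D23 := Dtri x₁ x₂ x₃ h₁.le h₂.le
  have T2 : D12 ≤ D14 + D24 := Dtri x₁ x₂ x₄ h₁.le h₂.le
  have T3 : D34 ≤ D13 + D14 := by
    have := Dtri x₃ x₄ x₁ h₃.le h₄.le
    have e1 : dist x₃.1 x₁.1 = dist x₁.1 x₃.1 := dist_comm _ _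
    have e2 : dist x₄.1 x₁.1 = dist x₁.1 x₄.1 := dist_comm _ _
    have e3 : max x₃.2 x₁.2 = max x₁.2 x₃.2 := max_comm _ _
    have e4 : max x₄.2 x₁.2 = max x₁.2 x₄.2 := max_comm _ _
    rw [e1, e2, e3, e4] at this
    linarith
  have T4 : D34 ≤ D23 + D24 := by
    have := Dtri x₃ x₄ x₂ h₃.le h₄.le
    have e1 : dist x₃.1 x₂.1 = dist x₂.1 x₃.1 := dist_comm _ _
    have e2 : dist x₄.1 x₂.1 = dist x₂.1 x₄.1 := dist_comm _ _
    have e3 : max x₃.2 x₂.2 = max x₂.2 x₃.2 := max_comm _ _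
    have e4 : max x₄.2 x₂.2 = max x₂.2 x₄.2 := max_comm _ _
    rw [e1, e2, e3, e4] at this
    linarith
  have key : D12 * D34 ≤ 4 * max (D13 * D24) (D14 * D23) :=
    key_ineq_s1 D13 D24 D14 D23 D12 D34 P13.le P24.le P14.le P23.le P34.le T1 (by linarith) T3 (by linarith)
  have e12 := eBS x₁ x₂ h₁ h₂
  have e34 := eBS x₃ x₄ h₃ h₄
  have e13 := eBS x₁ x₃ h₁ h₃
  have e24 := eBS x₂ x₄ h₂ h₄
  have e14 := eBS x₁ x₄ h₁ h₄
  have e23 := eBS x₂ x₃ h₂ h₃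
  rcases le_total (D13 * D24) (D14 * D23) with h | h
  · have hm : max (D13 * D24) (D14 * D23) = D14 * D23 := max_eq_right h
    rw [hm] at key
    have hlog : Real.log (D12 * D34) ≤ Real.log (4 * (D14 * D23)) :=
      Real.log_le_log (by positivity) key
    rw [Real.log_mul P12.ne' P34.ne', Real.log_mul (by norm_num) (by positivity),
      Real.log_mul P14.ne' P23.ne'] at hlog
    calc BS x₁ x₂ + BS x₃ x₄ ≤ (BS x₁ x₄ + BS x₂ x₃) + 2 * Real.log 4 := by
          rw [e12, e34, e14, e23]; linarith
      _ ≤ max (BS x₁ x₃ + BS x₂ x₄) (BS x₁ x₄ + BS x₂ x₃) + 2 * Real.log 4 := by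
          gcongr; exact le_max_right _ _
  · have hm : max (D13 * D24) (D14 * D23) = D13 * D24 := max_eq_left h
    rw [hm] at key
    have hlog : Real.log (D12 * D34) ≤ Real.log (4 * (D13 * D24)) :=
      Real.log_le_log (by positivity) key
    rw [Real.log_mul P12.ne' P34.ne', Real.log_mul (by norm_num) (by positivity),
      Real.log_mul P13.ne' P24.ne'] at hlog
    calc BS x₁ x₂ + BS x₃ x₄ ≤ (BS x₁ x₃ + BS x₂ x₄) + 2 * Real.log 4 := by
          rw [e12, e34, e13, e24]; linarith
      _ ≤ max (BS x₁ x₃ + BS x₂ x₄) (BS x₁ x₄ + BS x₂ x₃) + 2 * Real.log 4 := by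
          gcongr; exact le_max_left _ _
end

section
/- Suppose r : Fin 4 → Fin 4 → ℝ satisfies r i j ≥ 0, r i j = r j i, and r i j ≤ r i k + r k j for all i, j, k. Then r 0 1 · r 2 3 ≤ 4 · max(r 0 2 · r 1 3, r 0 3 · r 1 2). -/
lemma half (a b p q : ℝ) (hb : 0 ≤ b) (hp : 0 ≤ p) (h1 : a ≤ 2*p) (h2 : b ≤ 2*q) :
    a*b ≤ 4*(p*q) := by nlinarith [mul_le_mul h1 h2 hb (by linarith : (0:ℝ) ≤ 2*p)]

lemma key (a b x y u v : ℝ) (hx : 0 ≤ x) (hy : 0 ≤ y) (hu : 0 ≤ u) (hv : 0 ≤ v)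
    (ha : 0 ≤ a) (hb : 0 ≤ b)
    (h1 : a ≤ x + v) (h2 : a ≤ u + y) (h3 : b ≤ x + u) (h4 : b ≤ v + y) :
    a * b ≤ 4 * (x * y) ∨ a * b ≤ 4 * (u * v) := by
  have A1 : a ≤ 2*x ∨ a ≤ 2*v := (le_total a (2*x)).imp (fun h => h) (fun h => by linarith)
  have A2 : a ≤ 2*u ∨ a ≤ 2*y := (le_total a (2*u)).imp (fun h => h) (fun h => by linarith)
  have B1 : b ≤ 2*x ∨ b ≤ 2*u := (le_total b (2*x)).imp (fun h => h) (fun h => by linarith)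
  have B2 : b ≤ 2*v ∨ b ≤ 2*y := (le_total b (2*v)).imp (fun h => h) (fun h => by linarith)
  rcases A1 with c1|c1 <;> rcases A2 with c2|c2 <;> rcases B1 with c3|c3 <;> rcases B2 with c4|c4 <;>
    rcases le_total a b with hab|hab <;>
    first
      | exact Or.inl (half a b x y hb hx (by linarith) (by linarith))
      | exact Or.inl (by rw [mul_comm a b]; exact half b a x y ha hx (by linarith) (by linarith))
      | exact Or.inr (half a b u v hb hu (by linarith) (by linarith))
      | exact Or.inr (by rw [mul_comm a b]; exact half b a u v ha hu (by linarith) (by linarith))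

/-- for a nonnegative symmetric array satisfying the triangle
inequality in its indices, `r 0 1 · r 2 3 ≤ 4 · max(r 0 2 · r 1 3, r 0 3 · r 1 2)`. -/
theorem stmt2 (r : Fin 4 → Fin 4 → ℝ)
    (hnonneg : ∀ i j, 0 ≤ r i j)
    (hsymm : ∀ i j, r i j = r j i)
    (htri : ∀ i j k, r i j ≤ r i k + r k j) :
    r 0 1 * r 2 3 ≤ 4 * max (r 0 2 * r 1 3) (r 0 3 * r 1 2) := by
  have h1 : r 0 1 ≤ r 0 2 + r 1 2 := by have := htri 0 1 2; rw [hsymm 2 1] at this; linarith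
  have h2 : r 0 1 ≤ r 0 3 + r 1 3 := by have := htri 0 1 3; rw [hsymm 3 1] at this; linarith
  have h3 : r 2 3 ≤ r 0 2 + r 0 3 := by have := htri 2 3 0; rw [hsymm 2 0] at this; linarith
  have h4 : r 2 3 ≤ r 1 2 + r 1 3 := by have := htri 2 3 1; rw [hsymm 2 1] at this; linarith
  rcases key (r 0 1) (r 2 3) (r 0 2) (r 1 3) (r 0 3) (r 1 2)
      (hnonneg 0 2) (hnonneg 1 3) (hnonneg 0 3) (hnonneg 1 2) (hnonneg 0 1) (hnonneg 2 3)
      h1 h2 h3 h4 with h | h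
  · exact h.trans (by
      have := le_max_left (r 0 2 * r 1 3) (r 0 3 * r 1 2); linarith)
  · exact h.trans (by
      have := le_max_right (r 0 2 * r 1 3) (r 0 3 * r 1 2); linarith)
end

section
/- Let (Y, d_Y) be a compact geodesic metric space and M > 0. Let d_ℓ be the induced length metric on X_M = Y × (0, M] associated to the Balogh–Schramm distance ρ. Then there exists a constant C ≥ 0 such that for all x, y ∈ X_M: ρ(x,y) ≤ d_ℓ(x,y) ≤ ρ(x,y) + C. -/
open Set

/-- Length of the map `γ` over the set `S` with respect to the distance
function `d`: the supremum over finite monotone partitions in `S` of the sums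
of consecutive distances (as in Mathlib's `eVariationOn`). -/
noncomputable def lengthOn {X : Type*} (d : X → X → ℝ) (γ : ℝ → X) (S : Set ℝ) : ENNReal :=
  ⨆ p : ℕ × { u : ℕ → ℝ // Monotone u ∧ ∀ i, u i ∈ S },
    ∑ i ∈ Finset.range p.1, ENNReal.ofReal (d (γ (p.2.1 i)) (γ (p.2.1 (i + 1))))

/-- Membership in `X_M = Y × (0, M]`. -/
def inXM {Y : Type*} (M : ℝ) (x : Y × ℝ) : Prop := 0 < x.2 ∧ x.2 ≤ M

/-- The induced length metric on `X_M = Y × (0, M]`: the infimum of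
Balogh–Schramm lengths of continuous paths joining `x` and `y` inside `X_M`. -/
noncomputable def dLen {Y : Type*} [MetricSpace Y] (M : ℝ) (x y : Y × ℝ) : ℝ :=
  (sInf {L : ENNReal | ∃ (a b : ℝ) (γ : ℝ → Y × ℝ), a ≤ b ∧
      ContinuousOn γ (Icc a b) ∧ γ a = x ∧ γ b = y ∧
      (∀ t ∈ Icc a b, inXM M (γ t)) ∧
      lengthOn (BS (Y := Y)) γ (Icc a b) = L}).toReal

/-- A metric space is geodesic: any two points are joined by an isometric
embedding of `[0, dist p q]`. -/
def GeodesicSpace (Y : Type*) [MetricSpace Y] : Prop :=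
  ∀ p q : Y, ∃ α : ℝ → Y, α 0 = p ∧ α (dist p q) = q ∧
    ∀ s ∈ Icc (0:ℝ) (dist p q), ∀ t ∈ Icc (0:ℝ) (dist p q), dist (α s) (α t) = |s - t|

/-- The Gromov product `(x,y)_ω` with respect to the length metric `dLen M`. -/
noncomputable def gromovProd {Y : Type*} [MetricSpace Y] (M : ℝ) (ω x y : Y × ℝ) : ℝ :=
  (dLen M x ω + dLen M y ω - dLen M x y) / 2


lemma log_add_le {x h : ℝ} (hh : 0 < h) (hx : 0 ≤ x) :
    Real.log (x + h) ≤ x / h + Real.log h := by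
  have h1 : Real.log (x + h) - Real.log h = Real.log ((x + h) / h) :=
    (Real.log_div (by positivity) (ne_of_gt hh)).symm
  have h2 : Real.log ((x + h) / h) ≤ (x + h) / h - 1 :=
    Real.log_le_sub_one_of_pos (by positivity)
  have h3 : (x + h) / h - 1 = x / h := by field_simp; ring
  linarith

lemma BS_nonneg {Y : Type*} [MetricSpace Y] {x y : Y × ℝ} (hx : 0 < x.2) (hy : 0 < y.2) :
    0 ≤ BS x y := by
  unfold BS
  have hmax : 0 < max x.2 y.2 := lt_max_of_lt_left hx
  have h1 : Real.sqrt (x.2 * y.2) ≤ max x.2 y.2 := by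
    rw [show max x.2 y.2 = Real.sqrt ((max x.2 y.2) ^ 2) from (Real.sqrt_sq hmax.le).symm]
    apply Real.sqrt_le_sqrt
    nlinarith [le_max_left x.2 y.2, le_max_right x.2 y.2]
  have h2 : (0:ℝ) < Real.sqrt (x.2 * y.2) := Real.sqrt_pos.mpr (by positivity)
  have h3 : 1 ≤ (dist x.1 y.1 + max x.2 y.2) / Real.sqrt (x.2 * y.2) := by
    rw [le_div_iff₀ h2]
    have := dist_nonneg (x := x.1) (y := y.1)
    linarith
  linarith [Real.log_nonneg h3]

lemma le_lengthOn {X : Type*} (d : X → X → ℝ) (γ : ℝ → X) {a b : ℝ} (hab : a ≤ b) :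
    ENNReal.ofReal (d (γ a) (γ b)) ≤ lengthOn d γ (Icc a b) := by
  have hmono : Monotone (fun i : ℕ => if i = 0 then a else b) := by
    intro i j hij
    dsimp only
    split_ifs with h1 h2
    · exact le_refl a
    · exact hab
    · omega
    · exact le_refl b
  have hmem : ∀ i : ℕ, (if i = 0 then a else b) ∈ Icc a b := by
    intro i; split_ifs
    · exact ⟨le_refl a, hab⟩
    · exact ⟨hab, le_refl b⟩
  have := le_iSup (fun p : ℕ × { u : ℕ → ℝ // Monotone u ∧ ∀ i, u i ∈ Icc a b } =>
    ∑ i ∈ Finset.range p.1, ENNReal.ofReal (d (γ (p.2.1 i)) (γ (p.2.1 (i + 1)))))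
    (⟨1, ⟨fun i => if i = 0 then a else b, hmono, hmem⟩⟩)
  simpa [lengthOn] using this

lemma lengthOn_le {X : Type*} (d : X → X → ℝ) (γ : ℝ → X) {a b : ℝ} (f : ℝ → ℝ)
    (hkey : ∀ u ∈ Icc a b, ∀ v ∈ Icc a b, u ≤ v →
      0 ≤ d (γ u) (γ v) ∧ d (γ u) (γ v) ≤ f v - f u) :
    lengthOn d γ (Icc a b) ≤ ENNReal.ofReal (f b - f a) := by
  apply iSup_le
  rintro ⟨n, u, humono, humem⟩
  have hab : a ≤ b := le_trans (humem 0).1 (humem 0).2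
  have hstep : ∀ i : ℕ, 0 ≤ f (u (i+1)) - f (u i) ∧
      d (γ (u i)) (γ (u (i+1))) ≤ f (u (i+1)) - f (u i) := by
    intro i
    have h := hkey (u i) (humem i) (u (i+1)) (humem (i+1)) (humono (Nat.le_succ i))
    exact ⟨le_trans h.1 h.2, h.2⟩
  calc ∑ i ∈ Finset.range n, ENNReal.ofReal (d (γ (u i)) (γ (u (i + 1))))
      ≤ ∑ i ∈ Finset.range n, ENNReal.ofReal (f (u (i+1)) - f (u i)) := by
        apply Finset.sum_le_sum
        intro i _
        exact ENNReal.ofReal_le_ofReal (hstep i).2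
    _ = ENNReal.ofReal (∑ i ∈ Finset.range n, (f (u (i+1)) - f (u i))) := by
        rw [ENNReal.ofReal_sum_of_nonneg]
        intro i _
        exact (hstep i).1
    _ = ENNReal.ofReal (f (u n) - f (u 0)) := by
        rw [Finset.sum_range_sub (fun i => f (u i)) n]
    _ ≤ ENNReal.ofReal (f b - f a) := by
        apply ENNReal.ofReal_le_ofReal
        have h1 := hkey (u n) (humem n) b ⟨hab, le_refl b⟩ (humem n).2
        have h2 := hkey a ⟨le_refl a, hab⟩ (u 0) (humem 0) (humem 0).1
        linarith [le_trans h1.1 h1.2, le_trans h2.1 h2.2]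

lemma core {h D a1 a2 b1 b2 : ℝ} (hh : 0 < h) (hD : 0 ≤ D) (ha1 : 0 < a1) (hb2 : 0 < b2)
    (ha1h : a1 ≤ h) (_ha2h : a2 ≤ h) (_hb1h : b1 ≤ h) (hb2h : b2 ≤ h)
    (h12 : a1 ≤ b1) (h21 : b2 ≤ a2)
    (hstruct : 0 < D → b1 = h ∧ a2 = h) :
    2 * Real.log ((D + max (min a1 a2) (min b1 b2)) / Real.sqrt (min a1 a2 * min b1 b2)) ≤
      2 * D / h + (Real.log b1 - Real.log a1) + (Real.log a2 - Real.log b2) := by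
  have hb1 : 0 < b1 := lt_of_lt_of_le ha1 h12
  have ha2 : 0 < a2 := lt_of_lt_of_le hb2 h21
  have hApos : 0 < min a1 a2 := lt_min ha1 ha2
  have hBpos : 0 < min b1 b2 := lt_min hb1 hb2
  have hnum : 0 < D + max (min a1 a2) (min b1 b2) :=
    add_pos_of_nonneg_of_pos hD (lt_max_of_lt_left hApos)
  have hLHS : 2 * Real.log ((D + max (min a1 a2) (min b1 b2)) /
        Real.sqrt (min a1 a2 * min b1 b2))
      = 2 * Real.log (D + max (min a1 a2) (min b1 b2))
        - Real.log (min a1 a2) - Real.log (min b1 b2) := by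
    rw [Real.log_div hnum.ne' (by positivity), Real.log_sqrt (by positivity),
      Real.log_mul hApos.ne' hBpos.ne']
    ring
  rw [hLHS]
  rcases lt_or_ge 0 D with hDpos | hDz
  · obtain ⟨hb1e, ha2e⟩ := hstruct hDpos
    have hAe : min a1 a2 = a1 := min_eq_left (by rw [ha2e]; exact ha1h)
    have hBe : min b1 b2 = b2 := min_eq_right (by rw [hb1e]; exact hb2h)
    rw [hAe, hBe, hb1e, ha2e]
    have hmax : max a1 b2 ≤ h := max_le ha1h hb2h
    have hl1 : Real.log (D + max a1 b2) ≤ Real.log (D + h) :=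
      Real.log_le_log (by positivity) (by linarith)
    have hl2 : Real.log (D + h) ≤ D / h + Real.log h := log_add_le hh hDpos.le
    have hdiv : 2 * D / h = 2 * (D / h) := by ring
    linarith
  · have hD0 : D = 0 := le_antisymm hDz hD
    subst hD0
    rw [zero_add, show (2:ℝ) * 0 / h = 0 from by ring]
    have key : max (min a1 a2) (min b1 b2) * (a1 * b2) ≤
        min (min a1 a2) (min b1 b2) * (b1 * a2) := by
      rcases le_total (min a1 a2) (min b1 b2) with hAB | hAB
      · rw [max_eq_right hAB, min_eq_left hAB]
        rcases le_total a1 a2 with haa | haa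
        · rw [min_eq_left haa]
          have h1 : min b1 b2 * b2 ≤ b1 * a2 :=
            mul_le_mul (min_le_left _ _) h21 hb2.le hb1.le
          calc min b1 b2 * (a1 * b2) = a1 * (min b1 b2 * b2) := by ring
            _ ≤ a1 * (b1 * a2) := mul_le_mul_of_nonneg_left h1 ha1.le
        · rw [min_eq_right haa]
          have h1 : min b1 b2 * b2 ≤ a2 * a2 :=
            mul_le_mul (le_trans (min_le_right _ _) h21) h21 hb2.le ha2.le
          calc min b1 b2 * (a1 * b2) = a1 * (min b1 b2 * b2) := by ring
            _ ≤ b1 * (a2 * a2) := mul_le_mul h12 h1 (by positivity) hb1.le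
            _ = a2 * (b1 * a2) := by ring
      · rw [max_eq_left hAB, min_eq_right hAB]
        rcases le_total b1 b2 with hbb | hbb
        · rw [min_eq_left hbb]
          have h1 : min a1 a2 * b2 ≤ b1 * a2 :=
            mul_le_mul (le_trans (min_le_left _ _) h12) h21 hb2.le hb1.le
          calc min a1 a2 * (a1 * b2) = a1 * (min a1 a2 * b2) := by ring
            _ ≤ b1 * (b1 * a2) := mul_le_mul h12 h1 (by positivity) hb1.le
        · rw [min_eq_right hbb]
          have h1 : min a1 a2 * a1 ≤ a2 * b1 :=
            mul_le_mul (min_le_right _ _) h12 ha1.le ha2.le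
          calc min a1 a2 * (a1 * b2) = b2 * (min a1 a2 * a1) := by ring
            _ ≤ b2 * (a2 * b1) := mul_le_mul_of_nonneg_left h1 hb2.le
            _ = b2 * (b1 * a2) := by ring
    have hsum : Real.log (min a1 a2) + Real.log (min b1 b2) =
        Real.log (max (min a1 a2) (min b1 b2)) + Real.log (min (min a1 a2) (min b1 b2)) := by
      rcases le_total (min a1 a2) (min b1 b2) with hAB | hAB
      · rw [max_eq_right hAB, min_eq_left hAB]; ring
      · rw [max_eq_left hAB, min_eq_right hAB]
    have hlog : Real.log (max (min a1 a2) (min b1 b2) * (a1 * b2)) ≤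
        Real.log (min (min a1 a2) (min b1 b2) * (b1 * a2)) :=
      Real.log_le_log (by positivity) key
    rw [Real.log_mul (by positivity) (by positivity), Real.log_mul ha1.ne' hb2.ne',
      Real.log_mul (by positivity) (by positivity), Real.log_mul hb1.ne' ha2.ne'] at hlog
    linarith


/-- on a compact geodesic space `Y`, the induced length metric on
`X_M` is within an additive constant of the Balogh–Schramm distance. -/
theorem stmt3 {Y : Type*} [MetricSpace Y] [CompactSpace Y] (hgeo : GeodesicSpace Y)
    {M : ℝ} (hM : 0 < M) :
    ∃ C : ℝ, 0 ≤ C ∧ ∀ x y : Y × ℝ, inXM M x → inXM M y →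
      BS x y ≤ dLen M x y ∧ dLen M x y ≤ BS x y + C := by
  have hbdd : Bornology.IsBounded (univ : Set Y) := isCompact_univ.isBounded
  set DY := Metric.diam (univ : Set Y) with hDYdef
  have hDY0 : 0 ≤ DY := Metric.diam_nonneg
  have hC0 : 0 ≤ 2 + 2 * DY / M := by
    have : 0 ≤ 2 * DY / M := div_nonneg (by linarith) hM.le
    linarith
  refine ⟨2 + 2 * DY / M, hC0, ?_⟩
  intro x y hx hy
  obtain ⟨p, s⟩ := x
  obtain ⟨q, r⟩ := y
  have hs0 : 0 < s := hx.1
  have hsM : s ≤ M := hx.2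
  have hr0 : 0 < r := hy.1
  have hrM : r ≤ M := hy.2
  obtain ⟨α, hα0, hαd, hαiso⟩ := hgeo p q
  set d := dist p q with hddef
  have hd0 : 0 ≤ d := dist_nonneg
  have hdD : d ≤ DY := Metric.dist_le_diam_of_mem hbdd (mem_univ p) (mem_univ q)
  set h := min (max d (max s r)) M with hhdef
  have hsr : s ≤ max d (max s r) := le_trans (le_max_left s r) (le_max_right d _)
  have hrr : r ≤ max d (max s r) := le_trans (le_max_right s r) (le_max_right d _)
  have hh0 : 0 < h := lt_min (lt_of_lt_of_le hs0 hsr) hM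
  have hhM : h ≤ M := min_le_right _ _
  have hsh : s ≤ h := le_min hsr hsM
  have hrh : r ≤ h := le_min hrr hrM
  set b0 := (h - s) + d + (h - r) with hb0def
  have hb00 : 0 ≤ b0 := by rw [hb0def]; nlinarith
  have hb0h : h ≤ b0 + r := by rw [hb0def]; nlinarith
  have hb0h' : h ≤ s + b0 := by rw [hb0def]; nlinarith
  set pos : ℝ → ℝ := fun t => min (max (t - (h - s)) 0) d with hposdef
  set Ht : ℝ → ℝ := fun t => min (min (s + t) h) (min (b0 + r - t) h) with hHdef
  set γp : ℝ → Y × ℝ := fun t => (α (pos t), Ht t) with hγdef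
  set f : ℝ → ℝ := fun t => 2 * pos t / h
      + Real.log (min (s + t) h) - Real.log (min (b0 + r - t) h) with hfdef
  have hposmono : Monotone pos := by
    intro u v huv
    simp only [hposdef]
    exact min_le_min (max_le_max (by linarith) le_rfl) le_rfl
  have hpos0 : ∀ t, 0 ≤ pos t := by
    intro t; simp only [hposdef]
    exact le_min (le_max_right _ _) hd0
  have hposd : ∀ t, pos t ≤ d := by
    intro t; simp only [hposdef]
    exact min_le_right _ _
  have hposzero : pos 0 = 0 := by
    simp only [hposdef]
    rw [max_eq_right (by linarith), min_eq_left hd0]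
  have hposb0 : pos b0 = d := by
    simp only [hposdef]
    rw [max_eq_left (by rw [hb0def]; nlinarith), min_eq_right (by rw [hb0def]; nlinarith)]
  have hposcont : Continuous pos := by
    rw [hposdef]; fun_prop
  have hHcont : Continuous Ht := by
    rw [hHdef]; fun_prop
  have hαlip : LipschitzOnWith 1 α (Icc 0 d) := by
    apply LipschitzOnWith.of_dist_le_mul
    intro u hu v hv
    simp [hαiso u hu v hv, Real.dist_eq]
  have hγcont : ContinuousOn γp (Icc 0 b0) := by
    rw [hγdef]
    apply ContinuousOn.prodMk
    · exact hαlip.continuousOn.comp hposcont.continuousOn (fun t _ => ⟨hpos0 t, hposd t⟩)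
    · exact hHcont.continuousOn
  have hHzero : Ht 0 = s := by
    simp only [hHdef]
    rw [add_zero, sub_zero, min_eq_right hb0h, min_eq_left hsh, min_eq_left hsh]
  have hHb0 : Ht b0 = r := by
    simp only [hHdef]
    rw [show b0 + r - b0 = r from by ring, min_eq_right hb0h', min_eq_left hrh,
      min_eq_right hrh]
  have hγ0 : γp 0 = (p, s) := by
    rw [hγdef]
    dsimp only
    rw [hposzero, hα0, hHzero]
  have hγb0 : γp b0 = (q, r) := by
    rw [hγdef]
    dsimp only
    rw [hposb0, hαd, hHb0]
  have hHpos : ∀ t ∈ Icc (0:ℝ) b0, 0 < Ht t := by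
    intro t ht
    simp only [hHdef]
    exact lt_min (lt_min (by linarith [ht.1]) hh0) (lt_min (by linarith [ht.2]) hh0)
  have hHleM : ∀ t, Ht t ≤ M := by
    intro t
    simp only [hHdef]
    exact le_trans (le_trans (min_le_left _ _) (min_le_right _ _)) hhM
  have hmemXM : ∀ t ∈ Icc (0:ℝ) b0, inXM M (γp t) := by
    intro t ht
    refine ⟨?_, ?_⟩
    · simp only [hγdef]; exact hHpos t ht
    · simp only [hγdef]; exact hHleM t
  have hkey : ∀ u ∈ Icc (0:ℝ) b0, ∀ v ∈ Icc (0:ℝ) b0, u ≤ v →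
      0 ≤ BS (γp u) (γp v) ∧ BS (γp u) (γp v) ≤ f v - f u := by
    intro u hu v hv huv
    constructor
    · have h1 : 0 < (γp u).2 := by simp only [hγdef]; exact hHpos u hu
      have h2 : 0 < (γp v).2 := by simp only [hγdef]; exact hHpos v hv
      exact BS_nonneg h1 h2
    · have hdist' : dist (α (pos u)) (α (pos v)) = pos v - pos u := by
        rw [hαiso _ ⟨hpos0 u, hposd u⟩ _ ⟨hpos0 v, hposd v⟩,
          abs_of_nonpos (by linarith [hposmono huv])]
        ring
      have hBSeq : BS (γp u) (γp v) =
          2 * Real.log ((pos v - pos u + max (Ht u) (Ht v)) / Real.sqrt (Ht u * Ht v)) := by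
        unfold BS
        simp only [hγdef]
        rw [hdist']
      rw [hBSeq]
      have hstruct : 0 < pos v - pos u →
          min (s + v) h = h ∧ min (b0 + r - u) h = h := by
        intro hD
        have h1 : pos u < pos v := by linarith
        constructor
        · apply min_eq_right
          by_contra hc
          push_neg at hc
          have hv' : v ≤ h - s := by linarith
          have : pos v = 0 := by
            simp only [hposdef]
            rw [max_eq_right (by linarith), min_eq_left hd0]
          linarith [hpos0 u]
        · apply min_eq_right
          by_contra hc
          push_neg at hc
          have hu' : h - s + d ≤ u := by rw [hb0def] at hc; linarith
          have : d ≤ pos u := by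
            simp only [hposdef]
            exact le_min (le_trans (by linarith) (le_max_left _ _)) le_rfl
          linarith [hposd v]
      have hcore := core (h := h) (D := pos v - pos u)
        (a1 := min (s + u) h) (a2 := min (b0 + r - u) h)
        (b1 := min (s + v) h) (b2 := min (b0 + r - v) h)
        hh0 (by linarith [hposmono huv])
        (lt_min (by linarith [hu.1]) hh0)
        (lt_min (by linarith [hv.2]) hh0)
        (min_le_right _ _) (min_le_right _ _) (min_le_right _ _) (min_le_right _ _)
        (min_le_min (by linarith) le_rfl)
        (min_le_min (by linarith) le_rfl)
        hstruct
      have hfv : f v - f u = 2 * (pos v - pos u) / h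
          + (Real.log (min (s + v) h) - Real.log (min (s + u) h))
          + (Real.log (min (b0 + r - u) h) - Real.log (min (b0 + r - v) h)) := by
        simp only [hfdef]
        ring
      rw [hfv]
      simp only [hHdef]
      exact hcore
  -- values of f at the endpoints
  have hf0 : f 0 = Real.log s - Real.log h := by
    simp only [hfdef]
    rw [hposzero, add_zero, sub_zero, min_eq_right hb0h, min_eq_left hsh]
    ring
  have hfb0 : f b0 = 2 * d / h + Real.log h - Real.log r := by
    simp only [hfdef]
    rw [hposb0, show b0 + r - b0 = r from by ring, min_eq_right hb0h', min_eq_left hrh]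
  have hBSxy : BS (p, s) (q, r) = 2 * Real.log (d + max s r) - Real.log s - Real.log r := by
    unfold BS
    dsimp only
    rw [← hddef]
    have hnum : (0:ℝ) < d + max s r := by
      have : s ≤ max s r := le_max_left s r
      linarith
    rw [Real.log_div hnum.ne' (by positivity), Real.log_sqrt (by positivity),
      Real.log_mul hs0.ne' hr0.ne']
    ring
  have hmain : f b0 - f 0 ≤ BS (p, s) (q, r) + (2 + 2 * DY / M) := by
    rw [hf0, hfb0, hBSxy]
    have hlogh : Real.log h ≤ Real.log (d + max s r) := by
      apply Real.log_le_log hh0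
      calc h ≤ max d (max s r) := min_le_left _ _
        _ ≤ d + max s r := by
          apply max_le
          · have : (0:ℝ) ≤ max s r := le_trans hs0.le (le_max_left s r)
            linarith
          · linarith
    have hdh : 2 * d / h ≤ 2 + 2 * DY / M := by
      rcases le_total (max d (max s r)) M with hc | hc
      · have hhe : h = max d (max s r) := min_eq_left hc
        have hdh' : d ≤ h := by rw [hhe]; exact le_max_left _ _
        have h2 : 2 * d / h ≤ 2 := by
          rw [div_le_iff₀ hh0]; linarith
        have h3 : 0 ≤ 2 * DY / M := div_nonneg (by linarith) hM.le
        linarith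
      · have hhe : h = M := min_eq_right hc
        rw [hhe]
        have h2 : 2 * d / M ≤ 2 * DY / M := by gcongr
        linarith
    linarith
  -- assemble
  set S := {L : ENNReal | ∃ (a b : ℝ) (γ : ℝ → Y × ℝ), a ≤ b ∧
      ContinuousOn γ (Icc a b) ∧ γ a = (p, s) ∧ γ b = (q, r) ∧
      (∀ t ∈ Icc a b, inXM M (γ t)) ∧
      lengthOn (BS (Y := Y)) γ (Icc a b) = L} with hSdef
  have hdLen : dLen M (p, s) (q, r) = (sInf S).toReal := rfl
  have hmemS : lengthOn (BS (Y := Y)) γp (Icc 0 b0) ∈ S :=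
    ⟨0, b0, γp, hb00, hγcont, hγ0, hγb0, hmemXM, rfl⟩
  have hub : sInf S ≤ ENNReal.ofReal (BS (p, s) (q, r) + (2 + 2 * DY / M)) := by
    apply le_trans (sInf_le hmemS)
    apply le_trans (lengthOn_le _ _ f hkey)
    exact ENNReal.ofReal_le_ofReal (by linarith)
  have hBS0 : 0 ≤ BS (p, s) (q, r) := BS_nonneg hs0 hr0
  have hlb : ENNReal.ofReal (BS (p, s) (q, r)) ≤ sInf S := by
    apply le_sInf
    rintro L ⟨a, b, γ', hab, _, hga, hgb, _, hlen⟩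
    rw [← hlen]
    have := le_lengthOn (BS (Y := Y)) γ' hab
    rwa [hga, hgb] at this
  have hne : sInf S ≠ ⊤ := ne_top_of_le_ne_top ENNReal.ofReal_ne_top hub
  rw [hdLen]
  constructor
  · have := ENNReal.toReal_mono hne hlb
    rwa [ENNReal.toReal_ofReal hBS0] at this
  · have := ENNReal.toReal_mono ENNReal.ofReal_ne_top hub
    rwa [ENNReal.toReal_ofReal (by linarith)] at this
end

section
/- Let (Y, d_Y) be a compact geodesic metric space and M > 0. Let d_ℓ be the induced length metric on X_M = Y × (0, M] associated to the Balogh–Schramm distance ρ. Then (X_M, d_ℓ) is a geodesic metric space: for every x, y ∈ X_M there is an isometric embedding γ : [0, d_ℓ(x,y)] → X_M with γ(0) = x and γ(d_ℓ(x,y)) = y. -/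
open Set

/-! ### Auxiliary: the explicit formula for the induced length metric -/

/-- Optimal height for the geodesic between `x` and `y`. -/
noncomputable def hOpt {Y : Type*} [MetricSpace Y] (M : ℝ) (x y : Y × ℝ) : ℝ :=
  min (max (dist x.1 y.1) (max x.2 y.2)) M

/-- Explicit formula for the induced length metric. -/
noncomputable def Fd {Y : Type*} [MetricSpace Y] (M : ℝ) (x y : Y × ℝ) : ℝ :=
  2 * Real.log (hOpt M x y) - Real.log x.2 - Real.log y.2
    + 2 * dist x.1 y.1 / hOpt M x y

section LogHelpers

lemma log_sub_log_le {a b : ℝ} (ha : 0 < a) (hab : a ≤ b) :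
    Real.log b - Real.log a ≤ (b - a) / a := by
  have hb : 0 < b := lt_of_lt_of_le ha hab
  have := Real.log_le_sub_one_of_pos (x := b / a) (by positivity)
  rw [Real.log_div hb.ne' ha.ne'] at this
  linarith [this, (by field_simp : b / a - 1 = (b - a) / a)]

lemma le_log_sub_log {a b : ℝ} (ha : 0 < a) (hab : a ≤ b) :
    (b - a) / b ≤ Real.log b - Real.log a := by
  have hb : 0 < b := lt_of_lt_of_le ha hab
  have := Real.log_le_sub_one_of_pos (x := a / b) (by positivity)
  rw [Real.log_div ha.ne' hb.ne'] at this
  have h2 : a / b - 1 = -((b - a) / b) := by field_simp; ring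
  linarith [this]

end LogHelpers

section FdBasic

variable {Y : Type*} [MetricSpace Y] {M : ℝ} (hM : 0 < M)

lemma hOpt_pos {x y : Y × ℝ} (hx : inXM M x) (hy : inXM M y) (hM : 0 < M) :
    0 < hOpt M x y :=
  lt_min (lt_of_lt_of_le hx.1 (le_max_of_le_right (le_max_left _ _))) hM

lemma max_le_hOpt {x y : Y × ℝ} (hx : inXM M x) (hy : inXM M y) :
    max x.2 y.2 ≤ hOpt M x y :=
  le_min (le_max_right _ _) (max_le hx.2 hy.2)

lemma hOpt_le_M (x y : Y × ℝ) (hM : 0 < M) : hOpt M x y ≤ M := min_le_right _ _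

lemma hOpt_comm (x y : Y × ℝ) : hOpt M x y = hOpt M y x := by
  simp [hOpt, dist_comm, max_comm x.2 y.2]

lemma Fd_comm (x y : Y × ℝ) : Fd M x y = Fd M y x := by
  simp only [Fd, hOpt_comm x y, dist_comm x.1 y.1]; ring

lemma Fd_self {x : Y × ℝ} (hx : inXM M x) : Fd M x x = 0 := by
  have h1 : hOpt M x x = x.2 := by
    unfold hOpt
    rw [dist_self, max_self, max_eq_right hx.1.le, min_eq_left hx.2]
  simp [Fd, h1]; ring

lemma Fd_nonneg {x y : Y × ℝ} (hx : inXM M x) (hy : inXM M y) (hM : 0 < M) :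
    0 ≤ Fd M x y := by
  have h0 := hOpt_pos hx hy hM
  have h1 : Real.log x.2 ≤ Real.log (hOpt M x y) :=
    Real.log_le_log hx.1 (le_trans (le_max_left _ _) (max_le_hOpt hx hy))
  have h2 : Real.log y.2 ≤ Real.log (hOpt M x y) :=
    Real.log_le_log hy.1 (le_trans (le_max_right _ _) (max_le_hOpt hx hy))
  have h3 : 0 ≤ 2 * dist x.1 y.1 / hOpt M x y := by positivity
  unfold Fd; linarith

/-- The Balogh–Schramm quasi-metric is dominated by `Fd`. -/
lemma BS_le_Fd {x y : Y × ℝ} (hx : inXM M x) (hy : inXM M y) (hM : 0 < M) :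
    BS x y ≤ Fd M x y := by
  set d := dist x.1 y.1 with hd
  set m := max x.2 y.2 with hm
  set h := hOpt M x y with hh
  have hd0 : 0 ≤ d := dist_nonneg
  have hm0 : 0 < m := lt_max_of_lt_left hx.1
  have hpos : 0 < h := hOpt_pos hx hy hM
  have hmh : m ≤ h := max_le_hOpt hx hy
  have hs : 0 < x.2 := hx.1
  have ht : 0 < y.2 := hy.1
  have hsq : Real.log (Real.sqrt (x.2 * y.2)) = (Real.log x.2 + Real.log y.2) / 2 := by
    rw [Real.log_sqrt (by positivity), Real.log_mul hs.ne' ht.ne']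
  have hBS : BS x y = 2 * Real.log (d + m) - Real.log x.2 - Real.log y.2 := by
    rw [BS, Real.log_div (by positivity) (by positivity), hsq]; ring
  rw [hBS]
  have key : Real.log (d + m) ≤ Real.log h + d / h := by
    have h1 : d + m ≤ h * Real.exp (d / h) := by
      have e1 : d / h + 1 ≤ Real.exp (d / h) := Real.add_one_le_exp _
      have e2 : h * (d / h + 1) = d + h := by field_simp
      nlinarith [hmh, hpos]
    calc Real.log (d + m) ≤ Real.log (h * Real.exp (d / h)) :=
          Real.log_le_log (by positivity) h1
      _ = Real.log h + d / h := by
          rw [Real.log_mul hpos.ne' (Real.exp_pos _).ne', Real.log_exp]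
  unfold Fd
  rw [← hh, ← hd]
  have : 2 * d / h = 2 * (d / h) := by ring
  rw [this]; linarith [key]

end FdBasic

section Triangle

variable {Y : Type*} [MetricSpace Y] {M : ℝ}

/-- `h ↦ 2 log h + 2 d / h` is minimized on `[max s t, M]` at the clamped value. -/
lemma phi_opt {d s t M H : ℝ} (hd : 0 ≤ d) (hs : 0 < s) (ht : 0 < t)
    (hsM : s ≤ M) (htM : t ≤ M) (hH : max s t ≤ H) (hHM : H ≤ M) :
    2 * Real.log (min (max d (max s t)) M) + 2 * d / min (max d (max s t)) M
      ≤ 2 * Real.log H + 2 * d / H := by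
  set m := max s t with hm
  set h := min (max d m) M with hh
  have hm0 : 0 < m := lt_max_of_lt_left hs
  have hmM : m ≤ M := max_le hsM htM
  have hH0 : 0 < H := lt_of_lt_of_le hm0 hH
  rcases le_total d m with hdm | hdm
  · -- h = m
    have hhm : h = m := by rw [hh, max_eq_right hdm, min_eq_left hmM]
    rw [hhm]
    have l1 : (H - m) / H ≤ Real.log H - Real.log m := le_log_sub_log hm0 hH
    have l2 : 2 * d / m - 2 * d / H = 2 * d * (H - m) / (m * H) := by field_simp
    have l3 : 2 * d * (H - m) / (m * H) ≤ 2 * ((H - m) / H) := by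
      rw [mul_div_assoc'] at *
      rw [div_le_div_iff₀ (by positivity) hH0]
      nlinarith [mul_nonneg (mul_nonneg (sub_nonneg.2 hdm) (sub_nonneg.2 hH)) hH0.le]
    linarith
  · rcases le_total d M with hdM | hdM
    · -- h = d
      have hd0 : 0 < d := lt_of_lt_of_le hm0 hdm
      have hhd : h = d := by rw [hh, max_eq_left hdm, min_eq_left hdM]
      rw [hhd]
      have key : 1 - d / H ≤ Real.log H - Real.log d := by
        rcases le_total d H with hc | hc
        · have l := le_log_sub_log hd0 hc
          have e : (H - d) / H = 1 - d / H := by field_simp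
          linarith [e ▸ l]
        · have l := log_sub_log_le hH0 hc
          have e : (d - H) / H = d / H - 1 := by field_simp
          linarith [e ▸ l]
      have e1 : 2 * d / d = 2 := by field_simp
      have e2 : 2 * d / H = 2 * (d / H) := by ring
      rw [e1, e2]; linarith
    · -- h = M
      have hM0 : 0 < M := lt_of_lt_of_le hs hsM
      have hhM : h = M := by rw [hh, max_eq_left hdm, min_eq_right hdM]
      rw [hhM]
      have l1 : Real.log M - Real.log H ≤ (M - H) / H := log_sub_log_le hH0 hHM
      have l2 : 2 * d / M - 2 * d / H = -(2 * d * (M - H) / (M * H)) := by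
        field_simp; ring
      have l3 : 2 * ((M - H) / H) ≤ 2 * d * (M - H) / (M * H) := by
        rw [mul_div_assoc'] at *
        rw [div_le_div_iff₀ hH0 (by positivity)]
        nlinarith [mul_nonneg (mul_nonneg (sub_nonneg.2 hdM) (sub_nonneg.2 hHM)) hH0.le]
      linarith

lemma tri_aux {h1 h2 y2 d12 d23 : ℝ} (h21 : h2 ≤ h1) (hy2 : 0 < y2)
    (hy2h2 : y2 ≤ h2) (hd12 : 0 ≤ d12) (hd23 : 0 ≤ d23) :
    2 * Real.log (max h1 h2) + 2 * (d12 + d23) / max h1 h2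
      ≤ 2 * Real.log h1 + 2 * d12 / h1 + (2 * Real.log h2 + 2 * d23 / h2)
        - 2 * Real.log y2 := by
  have hh2 : 0 < h2 := lt_of_lt_of_le hy2 hy2h2
  have hh1 : 0 < h1 := lt_of_lt_of_le hh2 h21
  rw [max_eq_left h21]
  have l1 : 2 * (d12 + d23) / h1 = 2 * d12 / h1 + 2 * d23 / h1 := by ring
  have l2 : 2 * d23 / h1 ≤ 2 * d23 / h2 :=
    div_le_div_of_nonneg_left (by linarith) hh2 h21
  have l3 : Real.log y2 ≤ Real.log h2 := Real.log_le_log hy2 hy2h2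
  linarith

lemma Fd_triangle {x y z : Y × ℝ} (hx : inXM M x) (hy : inXM M y) (hz : inXM M z)
    (hM : 0 < M) : Fd M x z ≤ Fd M x y + Fd M y z := by
  have h1pos : 0 < hOpt M x y := hOpt_pos hx hy hM
  have h2pos : 0 < hOpt M y z := hOpt_pos hy hz hM
  set d12 := dist x.1 y.1 with hd12
  set d23 := dist y.1 z.1 with hd23
  set d13 := dist x.1 z.1 with hd13
  set h1 := hOpt M x y with hh1
  set h2 := hOpt M y z with hh2
  set H := max h1 h2 with hH
  have hx2h1 : x.2 ≤ h1 := le_trans (le_max_left _ _) (max_le_hOpt hx hy)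
  have hy2h1 : y.2 ≤ h1 := le_trans (le_max_right _ _) (max_le_hOpt hx hy)
  have hy2h2 : y.2 ≤ h2 := le_trans (le_max_left _ _) (max_le_hOpt hy hz)
  have hz2h2 : z.2 ≤ h2 := le_trans (le_max_right _ _) (max_le_hOpt hy hz)
  have hHM : H ≤ M := max_le (hOpt_le_M x y hM) (hOpt_le_M y z hM)
  have hHpos : 0 < H := lt_of_lt_of_le h1pos (le_max_left _ _)
  have step1 : 2 * Real.log (hOpt M x z) + 2 * d13 / hOpt M x z
      ≤ 2 * Real.log H + 2 * d13 / H := by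
    have := phi_opt (d := d13) (s := x.2) (t := z.2) (M := M) (H := H)
      dist_nonneg hx.1 hz.1 hx.2 hz.2
      (max_le (le_trans hx2h1 (le_max_left _ _)) (le_trans hz2h2 (le_max_right _ _)))
      hHM
    exact this
  have step2 : 2 * d13 / H ≤ 2 * (d12 + d23) / H := by
    have htri : d13 ≤ d12 + d23 := dist_triangle x.1 y.1 z.1
    gcongr
  have step3 : 2 * Real.log H + 2 * (d12 + d23) / H
      ≤ 2 * Real.log h1 + 2 * d12 / h1 + (2 * Real.log h2 + 2 * d23 / h2)
        - 2 * Real.log y.2 := by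
    rcases le_total h2 h1 with hc | hc
    · exact tri_aux hc hy.1 hy2h2 dist_nonneg dist_nonneg
    · have := tri_aux hc hy.1 hy2h1 (dist_nonneg (x := y.1) (y := z.1))
        (dist_nonneg (x := x.1) (y := y.1))
      rw [max_comm h2 h1] at this
      have e : d23 + d12 = d12 + d23 := by ring
      rw [e] at this
      linarith
  show 2 * Real.log (hOpt M x z) - Real.log x.2 - Real.log z.2 + 2 * d13 / hOpt M x z
      ≤ _
  have exy : Fd M x y = 2 * Real.log h1 - Real.log x.2 - Real.log y.2 + 2 * d12 / h1 := rfl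
  have eyz : Fd M y z = 2 * Real.log h2 - Real.log y.2 - Real.log z.2 + 2 * d23 / h2 := rfl
  rw [exy, eyz]
  linarith

lemma Fd_chain (hM : 0 < M) (n : ℕ) (f : ℕ → Y × ℝ) (hf : ∀ i, i ≤ n → inXM M (f i)) :
    Fd M (f 0) (f n) ≤ ∑ i ∈ Finset.range n, Fd M (f i) (f (i + 1)) := by
  induction n with
  | zero => simp [Fd_self (hf 0 le_rfl)]
  | succ n ih =>
      have h1 := Fd_triangle (M := M) (hf 0 (Nat.zero_le _))
        (hf n (Nat.le_succ _)) (hf (n+1) le_rfl) hM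
      have h2 := ih (fun i hi => hf i (le_trans hi (Nat.le_succ _)))
      rw [Finset.sum_range_succ]
      linarith

end Triangle

section Tent

variable {Y : Type*} [MetricSpace Y]

set_option maxHeartbeats 1600000 in
/-- The tent path: an `Fd`-geodesic between any two points of `X_M`. -/
lemma tent_path (hgeo : GeodesicSpace Y) {M : ℝ} (hM : 0 < M) (x y : Y × ℝ)
    (hx : inXM M x) (hy : inXM M y) :
    ∃ γ : ℝ → Y × ℝ, Continuous γ ∧ (∀ u, inXM M (γ u)) ∧ γ 0 = x ∧
      γ (Fd M x y) = y ∧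
      ∀ u, 0 ≤ u → ∀ v, u ≤ v → v ≤ Fd M x y → Fd M (γ u) (γ v) = v - u := by
  obtain ⟨p, s⟩ := x
  obtain ⟨q, t⟩ := y
  obtain ⟨hs, hsM⟩ := hx
  obtain ⟨ht, htM⟩ := hy
  obtain ⟨α, hα0, hαd, hαiso⟩ := hgeo p q
  set d : ℝ := dist p q with hd
  set m : ℝ := max s t with hm
  set h : ℝ := min (max d m) M with hh
  have hd0 : 0 ≤ d := dist_nonneg
  have hm0 : 0 < m := lt_max_of_lt_left hs
  have hmM : m ≤ M := max_le hsM htM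
  have hmh : m ≤ h := le_min (le_max_right _ _) hmM
  have hpos : 0 < h := lt_of_lt_of_le hm0 hmh
  have hhM : h ≤ M := min_le_right _ _
  have hsh : s ≤ h := le_trans (le_max_left _ _) hmh
  have hth : t ≤ h := le_trans (le_max_right _ _) hmh
  set A : ℝ := Real.log h - Real.log s with hA
  set B : ℝ := 2 * d / h with hB
  set C : ℝ := Real.log h - Real.log t with hC
  set L : ℝ := A + B + C with hL
  have hA0 : 0 ≤ A := sub_nonneg.2 (Real.log_le_log hs hsh)
  have hB0 : 0 ≤ B := by positivity
  have hC0 : 0 ≤ C := sub_nonneg.2 (Real.log_le_log ht hth)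
  have eA : s * Real.exp A = h := by
    rw [hA, Real.exp_sub, Real.exp_log hpos, Real.exp_log hs]
    field_simp
  have eC : t * Real.exp C = h := by
    rw [hC, Real.exp_sub, Real.exp_log hpos, Real.exp_log ht]
    field_simp
  have eBh : B * h / 2 = d := by rw [hB]; field_simp
  -- the optimal height of the pair (p,s),(q,t) is h
  have hOptxy : hOpt M (p, s) (q, t) = h := by rw [hh, hd, hm]; rfl
  have hFd : Fd M (p, s) (q, t) = L := by
    show 2 * Real.log (hOpt M (p,s) (q,t)) - Real.log s - Real.log t
        + 2 * dist p q / hOpt M (p,s) (q,t) = L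
    rw [hOptxy, hL, hA, hB, hC, ← hd]; ring
  set η : ℝ → ℝ := fun u => min h (min (s * Real.exp u) (t * Real.exp (L - u))) with hη
  set r : ℝ → ℝ := fun u => min d (max 0 ((u - A) * h / 2)) with hr
  set β : ℝ → Y := fun u => α (r u) with hβ
  set γ : ℝ → Y × ℝ := fun u => (β u, η u) with hγ
  clear_value γ β r η L C B A h m d
  -- range facts for r
  have hr_mem : ∀ u, r u ∈ Icc (0:ℝ) d := by
    intro u; rw [hr]; simp only
    exact ⟨le_min hd0 (le_max_left _ _), min_le_left _ _⟩
  -- closed forms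
  have η1 : ∀ u, 0 ≤ u → u ≤ A → η u = s * Real.exp u := by
    intro u hu0 huA
    have h1 : s * Real.exp u ≤ h := by
      rw [← eA]; exact mul_le_mul_of_nonneg_left (Real.exp_le_exp.2 huA) hs.le
    have h2 : s * Real.exp u ≤ t * Real.exp (L - u) := by
      have : h ≤ t * Real.exp (L - u) := by
        rw [← eC]
        exact mul_le_mul_of_nonneg_left (Real.exp_le_exp.2 (by rw [hL]; linarith)) ht.le
      linarith
    rw [hη]; simp only
    rw [min_eq_left h2, min_eq_right h1]
  have η2 : ∀ u, A ≤ u → u ≤ A + B → η u = h := by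
    intro u h1 h2
    have e1 : h ≤ s * Real.exp u := by
      rw [← eA]; exact mul_le_mul_of_nonneg_left (Real.exp_le_exp.2 h1) hs.le
    have e2 : h ≤ t * Real.exp (L - u) := by
      rw [← eC]
      exact mul_le_mul_of_nonneg_left (Real.exp_le_exp.2 (by rw [hL]; linarith)) ht.le
    rw [hη]; simp only
    rw [min_eq_left (le_min e1 e2)]
  have η3 : ∀ u, A + B ≤ u → u ≤ L → η u = t * Real.exp (L - u) := by
    intro u h1 h2
    have e1 : t * Real.exp (L - u) ≤ h := by
      rw [← eC]
      exact mul_le_mul_of_nonneg_left (Real.exp_le_exp.2 (by rw [hL]; linarith)) ht.le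
    have e2 : t * Real.exp (L - u) ≤ s * Real.exp u := by
      have : h ≤ s * Real.exp u := by
        rw [← eA]
        exact mul_le_mul_of_nonneg_left (Real.exp_le_exp.2 (by linarith)) hs.le
      linarith
    rw [hη]; simp only
    rw [min_eq_right e2, min_eq_right e1]
  have β1 : ∀ u, u ≤ A → β u = p := by
    intro u hu
    have : r u = 0 := by
      rw [hr]; simp only [hA]
      rw [max_eq_left (by nlinarith [mul_nonneg (show (0:ℝ) ≤ A - u by linarith) hpos.le]),
        min_eq_right hd0]
    rw [hβ]; simp only [this, hα0]
  have rβ2 : ∀ u, A ≤ u → u ≤ A + B → r u = (u - A) * h / 2 := by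
    intro u h1 h2
    have e0 : 0 ≤ (u - A) * h / 2 := by
      have := mul_nonneg (show (0:ℝ) ≤ u - A by linarith) hpos.le
      linarith
    rw [hr]; simp only
    rw [max_eq_right e0, min_eq_right (by
      have := mul_nonneg (show (0:ℝ) ≤ A + B - u by linarith) hpos.le
      nlinarith [eBh])]
  have β3 : ∀ u, A + B ≤ u → β u = q := by
    intro u hu
    have : r u = d := by
      rw [hr]; simp only
      have k1 := mul_nonneg (show (0:ℝ) ≤ u - A by nlinarith) hpos.le
      have k2 := mul_nonneg (show (0:ℝ) ≤ u - A - B by linarith) hpos.le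
      rw [max_eq_right (by linarith), min_eq_left (by nlinarith [eBh])]
    rw [hβ]; simp only [this, hαd]
  -- heights bounds
  have hη_pos : ∀ u, 0 < η u := by
    intro u; rw [hη]; simp only
    exact lt_min hpos (lt_min (by positivity) (by positivity))
  have hη_le : ∀ u, η u ≤ h := by
    intro u; rw [hη]; simp only; exact min_le_left _ _
  -- key lemma G for the optimal height of intermediate pairs
  have G : ∀ d' m'', 0 ≤ d' → d' ≤ d → m ≤ m'' → m'' ≤ h → (m'' = h ∨ d' = d) →
      min (max d' m'') M = h := by
    intro d' m'' h0 h1 h2 h3 hkey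
    rcases le_total d' m'' with hc | hc
    · rw [max_eq_right hc]
      have hm''h : m'' = h := by
        rcases hkey with he | he
        · exact he
        · have hmax : max d m ≤ m'' := max_le (he ▸ hc) h2
          have hle : h ≤ m'' := le_trans (by rw [hh]; exact min_le_left _ _) hmax
          linarith
      rw [hm''h, min_eq_left hhM]
    · rw [max_eq_left hc]
      rcases hkey with he | he
      · have hd'h : h ≤ d' := he ▸ hc
        rcases le_total (max d m) M with hmm | hmm
        · have hhe : h = max d m := by rw [hh]; exact min_eq_left hmm
          have hdh : d ≤ h := by rw [hhe]; exact le_max_left _ _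
          have : d' = h := le_antisymm (le_trans h1 hdh) hd'h
          rw [this, min_eq_left hhM]
        · have hhe : h = M := by rw [hh]; exact min_eq_right hmm
          rw [min_eq_right (hhe ▸ hd'h), hhe]
      · have hmd : max d m = d := max_eq_left (le_trans h2 (he ▸ hc))
        rw [he, hh, hmd]
  -- continuity
  have hαcont : ContinuousOn α (Icc 0 d) := by
    refine LipschitzOnWith.continuousOn (K := 1) ?_
    refine LipschitzOnWith.of_dist_le_mul ?_
    intro a ha b hb
    rw [hαiso a ha b hb]
    simp [Real.dist_eq]
  have hrcont : Continuous r := by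
    rw [hr]; fun_prop
  have hβcont : Continuous β := by
    rw [hβ]
    exact ContinuousOn.comp_continuous hαcont hrcont hr_mem
  have hηcont : Continuous η := by
    rw [hη]; fun_prop
  have hγcont : Continuous γ := by
    rw [hγ]; exact hβcont.prodMk hηcont
  have hinXM : ∀ u, inXM M (γ u) := by
    intro u
    rw [hγ]
    exact ⟨hη_pos u, le_trans (hη_le u) hhM⟩
  have hγ0 : γ 0 = (p, s) := by
    rw [hγ]; simp only
    rw [β1 0 hA0, η1 0 le_rfl hA0, Real.exp_zero, mul_one]
  have hγL : γ L = (q, t) := by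
    rw [hγ]; simp only
    rw [β3 L (by linarith), η3 L (by linarith) le_rfl, sub_self, Real.exp_zero, mul_one]
  have Fdf : ∀ (z w : Y) (a b : ℝ), Fd M (z, a) (w, b) =
      2 * Real.log (min (max (dist z w) (max a b)) M) - Real.log a - Real.log b
        + 2 * dist z w / min (max (dist z w) (max a b)) M := fun _ _ _ _ => rfl
  have hβ2 : ∀ u, A ≤ u → u ≤ A + B → β u = α ((u - A) * h / 2) := by
    intro u h1 h2
    rw [hβ]; simp only [rβ2 u h1 h2]
  have hrv_mem : ∀ v, A ≤ v → v ≤ A + B → (v - A) * h / 2 ∈ Icc (0:ℝ) d := by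
    intro v h1 h2
    constructor
    · have := mul_nonneg (show (0:ℝ) ≤ v - A by linarith) hpos.le
      linarith
    · have := mul_nonneg (show (0:ℝ) ≤ A + B - v by linarith) hpos.le
      linarith [eBh]
  have h0_mem : (0:ℝ) ∈ Icc (0:ℝ) d := ⟨le_rfl, hd0⟩
  have hd_mem : d ∈ Icc (0:ℝ) d := ⟨hd0, le_rfl⟩
  -- the six cases
  have c11 : ∀ u v, 0 ≤ u → u ≤ v → v ≤ A → Fd M (γ u) (γ v) = v - u := by
    intro u v h0 huv hvA
    have e1 : γ u = (p, s * Real.exp u) := by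
      rw [hγ]; simp only [β1 u (le_trans huv hvA), η1 u h0 (le_trans huv hvA)]
    have e2 : γ v = (p, s * Real.exp v) := by
      rw [hγ]; simp only [β1 v hvA, η1 v (le_trans h0 huv) hvA]
    have m1 : max (s*Real.exp u) (s*Real.exp v) = s * Real.exp v :=
      max_eq_right (mul_le_mul_of_nonneg_left (Real.exp_le_exp.2 huv) hs.le)
    have hsev : s * Real.exp v ≤ h := by
      rw [← eA]; exact mul_le_mul_of_nonneg_left (Real.exp_le_exp.2 hvA) hs.le
    have m2 : max (0:ℝ) (s*Real.exp v) = s * Real.exp v := max_eq_right (by positivity)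
    have m3 : min (s*Real.exp v) M = s*Real.exp v := min_eq_left (le_trans hsev hhM)
    rw [e1, e2, Fdf, dist_self, m1, m2, m3,
      Real.log_mul hs.ne' (Real.exp_ne_zero u), Real.log_mul hs.ne' (Real.exp_ne_zero v),
      Real.log_exp, Real.log_exp]
    ring
  have c33 : ∀ u v, A + B ≤ u → u ≤ v → v ≤ L → Fd M (γ u) (γ v) = v - u := by
    intro u v h0 huv hvL
    have e1 : γ u = (q, t * Real.exp (L - u)) := by
      rw [hγ]; simp only [β3 u h0, η3 u h0 (le_trans huv hvL)]
    have e2 : γ v = (q, t * Real.exp (L - v)) := by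
      rw [hγ]; simp only [β3 v (le_trans h0 huv), η3 v (le_trans h0 huv) hvL]
    have m1 : max (t*Real.exp (L-u)) (t*Real.exp (L-v)) = t * Real.exp (L-u) :=
      max_eq_left (mul_le_mul_of_nonneg_left (Real.exp_le_exp.2 (by linarith)) ht.le)
    have hteu : t * Real.exp (L-u) ≤ h := by
      rw [← eC]
      exact mul_le_mul_of_nonneg_left (Real.exp_le_exp.2 (by rw [hL]; linarith)) ht.le
    have m2 : max (0:ℝ) (t*Real.exp (L-u)) = t * Real.exp (L-u) := max_eq_right (by positivity)
    have m3 : min (t*Real.exp (L-u)) M = t*Real.exp (L-u) := min_eq_left (le_trans hteu hhM)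
    rw [e1, e2, Fdf, dist_self, m1, m2, m3,
      Real.log_mul ht.ne' (Real.exp_ne_zero _), Real.log_mul ht.ne' (Real.exp_ne_zero _),
      Real.log_exp, Real.log_exp]
    ring
  have c12 : ∀ u v, 0 ≤ u → u ≤ A → A ≤ v → v ≤ A + B → Fd M (γ u) (γ v) = v - u := by
    intro u v h0 huA hAv hvAB
    have hrvm := hrv_mem v hAv hvAB
    have e1 : γ u = (p, s * Real.exp u) := by
      rw [hγ]; simp only [β1 u huA, η1 u h0 huA]
    have e2 : γ v = (α ((v - A) * h / 2), h) := by
      rw [hγ]; simp only [hβ2 v hAv hvAB, η2 v hAv hvAB]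
    have hD : dist p (α ((v - A) * h / 2)) = (v - A) * h / 2 := by
      rw [← hα0, hαiso 0 h0_mem _ hrvm, zero_sub, abs_neg, abs_of_nonneg hrvm.1]
    have hseu : s * Real.exp u ≤ h := by
      rw [← eA]; exact mul_le_mul_of_nonneg_left (Real.exp_le_exp.2 huA) hs.le
    have m1 : max (s*Real.exp u) h = h := max_eq_right hseu
    have m2 : min (max ((v - A) * h / 2) h) M = h := G _ h hrvm.1 hrvm.2 hmh le_rfl (Or.inl rfl)
    rw [e1, e2, Fdf, hD, m1, m2,
      Real.log_mul hs.ne' (Real.exp_ne_zero u), Real.log_exp]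
    have hdiv : 2 * ((v - A) * h / 2) / h = v - A := by field_simp
    rw [hdiv, hA]
    ring
  have c22 : ∀ u v, A ≤ u → u ≤ v → v ≤ A + B → Fd M (γ u) (γ v) = v - u := by
    intro u v hAu huv hvAB
    have hrum := hrv_mem u hAu (le_trans huv hvAB)
    have hrvm := hrv_mem v (le_trans hAu huv) hvAB
    have e1 : γ u = (α ((u - A) * h / 2), h) := by
      rw [hγ]; simp only [hβ2 u hAu (le_trans huv hvAB), η2 u hAu (le_trans huv hvAB)]
    have e2 : γ v = (α ((v - A) * h / 2), h) := by
      rw [hγ]; simp only [hβ2 v (le_trans hAu huv) hvAB, η2 v (le_trans hAu huv) hvAB]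
    have hrurv : (u - A) * h / 2 ≤ (v - A) * h / 2 := by
      have := mul_le_mul_of_nonneg_right (show u - A ≤ v - A by linarith) hpos.le
      linarith
    have hD : dist (α ((u - A) * h / 2)) (α ((v - A) * h / 2))
        = (v - A) * h / 2 - (u - A) * h / 2 := by
      rw [hαiso _ hrum _ hrvm, abs_of_nonpos (by linarith), neg_sub]
    have m1 : max h h = h := max_self h
    have m2 : min (max ((v - A) * h / 2 - (u - A) * h / 2) h) M = h :=
      G _ h (by linarith) (by linarith [hrum.1, hrvm.2]) hmh le_rfl (Or.inl rfl)
    rw [e1, e2, Fdf, hD, m1, m2]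
    have hdiv : 2 * ((v - A) * h / 2 - (u - A) * h / 2) / h = v - u := by
      field_simp; ring
    rw [hdiv]
    ring
  have c23 : ∀ u v, A ≤ u → u ≤ A + B → A + B ≤ v → v ≤ L → Fd M (γ u) (γ v) = v - u := by
    intro u v hAu huAB hABv hvL
    have hrum := hrv_mem u hAu huAB
    have e1 : γ u = (α ((u - A) * h / 2), h) := by
      rw [hγ]; simp only [hβ2 u hAu huAB, η2 u hAu huAB]
    have e2 : γ v = (q, t * Real.exp (L - v)) := by
      rw [hγ]; simp only [β3 v hABv, η3 v hABv hvL]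
    have hD : dist (α ((u - A) * h / 2)) q = d - (u - A) * h / 2 := by
      rw [← hαd, hαiso _ hrum d hd_mem, abs_of_nonpos (by linarith [hrum.2]), neg_sub]
    have htev : t * Real.exp (L - v) ≤ h := by
      rw [← eC]
      exact mul_le_mul_of_nonneg_left (Real.exp_le_exp.2 (by rw [hL]; linarith)) ht.le
    have m1 : max h (t * Real.exp (L - v)) = h := max_eq_left htev
    have m2 : min (max (d - (u - A) * h / 2) h) M = h :=
      G _ h (by linarith [hrum.2]) (by linarith [hrum.1]) hmh le_rfl (Or.inl rfl)
    rw [e1, e2, Fdf, hD, m1, m2,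
      Real.log_mul ht.ne' (Real.exp_ne_zero _), Real.log_exp]
    have hdiv : 2 * (d - (u - A) * h / 2) / h = 2 * d / h - (u - A) := by
      field_simp
    rw [hdiv, ← hB, hL, hC]
    ring
  have c13 : ∀ u v, 0 ≤ u → u ≤ A → A + B ≤ v → v ≤ L → Fd M (γ u) (γ v) = v - u := by
    intro u v h0 huA hABv hvL
    have e1 : γ u = (p, s * Real.exp u) := by
      rw [hγ]; simp only [β1 u huA, η1 u h0 huA]
    have e2 : γ v = (q, t * Real.exp (L - v)) := by
      rw [hγ]; simp only [β3 v hABv, η3 v hABv hvL]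
    have hseu : s * Real.exp u ≤ h := by
      rw [← eA]; exact mul_le_mul_of_nonneg_left (Real.exp_le_exp.2 huA) hs.le
    have htev : t * Real.exp (L - v) ≤ h := by
      rw [← eC]
      exact mul_le_mul_of_nonneg_left (Real.exp_le_exp.2 (by rw [hL]; linarith)) ht.le
    have hm'' : m ≤ max (s * Real.exp u) (t * Real.exp (L - v)) := by
      rw [hm]
      apply max_le_max
      · nlinarith [Real.one_le_exp h0]
      · nlinarith [Real.one_le_exp (show (0:ℝ) ≤ L - v by linarith)]
    have m2 : min (max d (max (s * Real.exp u) (t * Real.exp (L - v)))) M = h :=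
      G d _ hd0 le_rfl hm'' (max_le hseu htev) (Or.inr rfl)
    rw [e1, e2, Fdf, ← hd, m2,
      Real.log_mul hs.ne' (Real.exp_ne_zero _), Real.log_mul ht.ne' (Real.exp_ne_zero _),
      Real.log_exp, Real.log_exp, ← hB]
    rw [hL, hA, hC]
    ring
  refine ⟨γ, hγcont, hinXM, hγ0, ?_, ?_⟩
  · rw [hFd]; exact hγL
  · intro u hu0 v huv hvF
    rw [hFd] at hvF
    rcases le_total v A with hvA | hAv
    · exact c11 u v hu0 huv hvA
    · rcases le_total v (A+B) with hvAB | hABv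
      · rcases le_total u A with huA | hAu
        · exact c12 u v hu0 huA hAv hvAB
        · exact c22 u v hAu huv hvAB
      · rcases le_total u A with huA | hAu
        · exact c13 u v hu0 huA hABv hvF
        · rcases le_total u (A+B) with huAB | hABu
          · exact c23 u v hAu huAB hABv hvF
          · exact c33 u v hABu huv hvF

end Tent

section Main

variable {Y : Type*} [MetricSpace Y] {M : ℝ}

lemma BS_eq {x y : Y × ℝ} (hx : 0 < x.2) (hy : 0 < y.2) :
    BS x y = 2 * Real.log (dist x.1 y.1 + max x.2 y.2)
      - Real.log x.2 - Real.log y.2 := by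
  have hm0 : 0 < max x.2 y.2 := lt_max_of_lt_left hx
  have hsq : Real.log (Real.sqrt (x.2 * y.2)) = (Real.log x.2 + Real.log y.2) / 2 := by
    rw [Real.log_sqrt (by positivity), Real.log_mul hx.ne' hy.ne']
  rw [BS, Real.log_div (by positivity) (by positivity), hsq]; ring

/-- Key comparison on small scales : `(1-ε)·Fd ≤ BS`. -/
lemma seg_le {c ε : ℝ} (hM : 0 < M) (hc : 0 < c) (hε0 : 0 < ε) (hε1 : ε ≤ 1)
    {x y : Y × ℝ} (hx : inXM M x) (hy : inXM M y)
    (hcx : c ≤ x.2) (hcy : c ≤ y.2) (hdxy : dist x.1 y.1 ≤ ε * c) :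
    (1 - ε) * Fd M x y ≤ BS x y := by
  set d := dist x.1 y.1 with hd
  set m := max x.2 y.2 with hm
  have hd0 : 0 ≤ d := dist_nonneg
  have hm0 : 0 < m := lt_max_of_lt_left hx.1
  have hcm : c ≤ m := le_trans hcx (le_max_left _ _)
  have hmM : m ≤ M := max_le hx.2 hy.2
  have hdm : d ≤ m := le_trans hdxy (by nlinarith)
  have hdεm : d ≤ ε * m := le_trans hdxy (by nlinarith)
  have hopt : hOpt M x y = m := by
    rw [hOpt, ← hd, ← hm, max_eq_right hdm, min_eq_left hmM]
  have hFd : Fd M x y = 2 * Real.log m - Real.log x.2 - Real.log y.2 + 2 * d / m := by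
    rw [Fd, hopt, ← hd]
  have hBS := BS_eq hx.1 hy.1
  rw [← hd, ← hm] at hBS
  set P := 2 * Real.log m - Real.log x.2 - Real.log y.2 with hP
  have hP0 : 0 ≤ P := by
    have h1 : Real.log x.2 ≤ Real.log m := Real.log_le_log hx.1 (le_max_left _ _)
    have h2 : Real.log y.2 ≤ Real.log m := Real.log_le_log hy.1 (le_max_right _ _)
    rw [hP]; linarith
  have l1 : d / (d + m) ≤ Real.log (d + m) - Real.log m := by
    have := le_log_sub_log hm0 (show m ≤ d + m by linarith)
    have e : (d + m - m) / (d + m) = d / (d + m) := by ring_nf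
    linarith [e ▸ this]
  have l2 : (1 - ε) * (2 * d / m) ≤ 2 * (d / (d + m)) := by
    have hdm0 : 0 < d + m := by linarith
    rw [show (1 - ε) * (2 * d / m) = (1 - ε) * (2 * d) / m from by ring,
      show 2 * (d / (d + m)) = 2 * d / (d + m) from by ring,
      div_le_div_iff₀ hm0 hdm0]
    nlinarith [mul_le_mul_of_nonneg_left hdεm hd0,
      mul_nonneg (mul_nonneg hε0.le hd0) hd0]
  have hBS' : BS x y = P + 2 * (Real.log (d + m) - Real.log m) := by
    rw [hBS, hP]; ring
  have hFd' : Fd M x y = P + 2 * d / m := by rw [hFd, hP]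
  rw [hBS', hFd']
  nlinarith [mul_nonneg hε0.le hP0, mul_nonneg hε0.le (show (0:ℝ) ≤ 2*d/m by positivity)]

/-- Lower bound: any admissible path has `BS`-length at least `Fd x y`. -/
lemma length_ge (hM : 0 < M) {a b : ℝ} {γ : ℝ → Y × ℝ} {x y : Y × ℝ}
    (hab : a ≤ b) (hcont : ContinuousOn γ (Icc a b)) (hga : γ a = x) (hgb : γ b = y)
    (hmem : ∀ t ∈ Icc a b, inXM M (γ t)) :
    ENNReal.ofReal (Fd M x y) ≤ lengthOn (BS (Y := Y)) γ (Icc a b) := by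
  have hxin : inXM M x := hga ▸ hmem a ⟨le_rfl, hab⟩
  have hyin : inXM M y := hgb ▸ hmem b ⟨hab, le_rfl⟩
  -- minimum height
  obtain ⟨t₀, ht₀, hmin⟩ := isCompact_Icc.exists_isMinOn (α := ℝ) ⟨a, le_rfl, hab⟩
    (continuous_snd.comp_continuousOn hcont)
  set c := (γ t₀).2 with hc
  have hc0 : 0 < c := (hmem t₀ ht₀).1
  have hcle : ∀ t ∈ Icc a b, c ≤ (γ t).2 := fun t ht => hmin ht
  clear_value c
  -- ε-approximation
  have key : ∀ ε : ℝ, 0 < ε → ε ≤ 1 →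
      ENNReal.ofReal ((1 - ε) * Fd M x y) ≤ lengthOn (BS (Y := Y)) γ (Icc a b) := by
    intro ε hε0 hε1
    have huc := isCompact_Icc.uniformContinuousOn_of_continuous hcont
    rw [Metric.uniformContinuousOn_iff] at huc
    obtain ⟨δ, hδ0, hδ⟩ := huc (ε * c) (by positivity)
    set n : ℕ := ⌊(b - a) / δ⌋₊ + 1 with hn
    have hn0 : 0 < (n:ℝ) := by positivity
    have hstep : (b - a) / n < δ := by
      rw [div_lt_iff₀ hn0]
      have h1 : (b - a) / δ < n := by
        rw [hn]; push_cast; exact Nat.lt_floor_add_one _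
      rw [div_lt_iff₀ hδ0] at h1
      linarith
    have hstep0 : 0 ≤ (b - a) / n := by
      apply div_nonneg (by linarith) hn0.le
    set u : ℕ → ℝ := fun i => a + (min i n : ℕ) * ((b - a) / n) with hu
    have humem : ∀ i, u i ∈ Icc a b := by
      intro i
      rw [hu]; simp only
      constructor
      · nlinarith [mul_nonneg (show (0:ℝ) ≤ (min i n : ℕ) by positivity) hstep0]
      · have h1 : ((min i n : ℕ) : ℝ) ≤ n := by
          exact_mod_cast Nat.cast_le.2 (min_le_right i n)
        have h2 : ((min i n : ℕ) : ℝ) * ((b - a)/n) ≤ n * ((b - a)/n) :=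
          mul_le_mul_of_nonneg_right h1 hstep0
        have h3 : (n:ℝ) * ((b - a)/n) = b - a := by field_simp
        linarith
    have humono : Monotone u := by
      intro i j hij
      rw [hu]; simp only
      have h1 : ((min i n : ℕ) : ℝ) ≤ ((min j n : ℕ) : ℝ) := by
        exact_mod_cast Nat.cast_le.2 (min_le_min_right n hij)
      linarith [mul_le_mul_of_nonneg_right h1 hstep0]
    have hu0 : u 0 = a := by rw [hu]; simp
    have hun : u n = b := by
      rw [hu]; simp only [min_self]
      field_simp
      ring
    have hclose : ∀ i, u (i+1) - u i ≤ (b - a) / n := by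
      intro i
      rw [hu]; simp only
      have h1 : ((min (i+1) n : ℕ) : ℝ) - ((min i n : ℕ) : ℝ) ≤ 1 := by
        have : min (i+1) n ≤ min i n + 1 := by omega
        have h2 : ((min (i+1) n : ℕ) : ℝ) ≤ ((min i n : ℕ) : ℝ) + 1 := by exact_mod_cast this
        linarith
      nlinarith [hstep0, mul_le_mul_of_nonneg_right h1 hstep0]
    clear_value u
    clear_value n
    have hseg : ∀ i, (1 - ε) * Fd M (γ (u i)) (γ (u (i+1)))
        ≤ BS (γ (u i)) (γ (u (i+1))) := by
      intro i
      have h1 : dist (γ (u i)) (γ (u (i+1))) < ε * c := by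
        apply hδ _ (humem i) _ (humem (i+1))
        rw [Real.dist_eq, abs_of_nonpos (by linarith [humono (Nat.le_succ i)])]
        have := hclose i
        linarith [hstep]
      have h2 : dist (γ (u i)).1 (γ (u (i+1))).1 ≤ ε * c := by
        refine le_trans ?_ h1.le
        rw [Prod.dist_eq]
        exact le_max_left _ _
      exact seg_le hM hc0 hε0 hε1 (hmem _ (humem i)) (hmem _ (humem (i+1)))
        (hcle _ (humem i)) (hcle _ (humem (i+1))) h2
    have hchain : Fd M x y ≤ ∑ i ∈ Finset.range n, Fd M (γ (u i)) (γ (u (i+1))) := by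
      have hch := Fd_chain (M := M) hM n (fun i => γ (u i)) (fun i _ => hmem _ (humem i))
      rw [hu0, hun, hga, hgb] at hch
      exact hch
    calc ENNReal.ofReal ((1 - ε) * Fd M x y)
        ≤ ENNReal.ofReal ((1 - ε) * ∑ i ∈ Finset.range n, Fd M (γ (u i)) (γ (u (i+1)))) := by
          apply ENNReal.ofReal_le_ofReal
          exact mul_le_mul_of_nonneg_left hchain (by linarith)
      _ = ENNReal.ofReal (∑ i ∈ Finset.range n, (1 - ε) * Fd M (γ (u i)) (γ (u (i+1)))) := by
          rw [Finset.mul_sum]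
      _ = ∑ i ∈ Finset.range n, ENNReal.ofReal ((1 - ε) * Fd M (γ (u i)) (γ (u (i+1)))) :=
          ENNReal.ofReal_sum_of_nonneg fun i _ => mul_nonneg (by linarith)
            (Fd_nonneg (hmem _ (humem i)) (hmem _ (humem (i+1))) hM)
      _ ≤ ∑ i ∈ Finset.range n, ENNReal.ofReal (BS (γ (u i)) (γ (u (i+1)))) :=
          Finset.sum_le_sum fun i _ => ENNReal.ofReal_le_ofReal (hseg i)
      _ ≤ lengthOn (BS (Y := Y)) γ (Icc a b) :=
          le_iSup (fun p : ℕ × { w : ℕ → ℝ // Monotone w ∧ ∀ i, w i ∈ Icc a b } =>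
            ∑ i ∈ Finset.range p.1, ENNReal.ofReal (BS (γ (p.2.1 i)) (γ (p.2.1 (i+1)))))
            ⟨n, ⟨u, humono, humem⟩⟩
  -- pass to the limit ε → 0
  have htend : Filter.Tendsto (fun k : ℕ => ENNReal.ofReal ((1 - 1/(k+1)) * Fd M x y))
      Filter.atTop (nhds (ENNReal.ofReal (Fd M x y))) := by
    apply ENNReal.tendsto_ofReal
    have h1 : Filter.Tendsto (fun k : ℕ => 1 - 1/((k:ℝ)+1)) Filter.atTop (nhds 1) := by
      have := tendsto_one_div_add_atTop_nhds_zero_nat (𝕜 := ℝ)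
      have h2 := Filter.Tendsto.const_sub (1:ℝ) this
      simpa using h2
    have := h1.mul_const (Fd M x y)
    simpa using this
  refine le_of_tendsto htend (Filter.Eventually.of_forall fun k => ?_)
  exact key (1/(k+1)) (by positivity) (by
    rw [div_le_one (by positivity)]
    linarith [Nat.cast_nonneg (α := ℝ) k])

/-- The induced length metric coincides with the explicit formula `Fd`. -/
lemma dLen_eq_Fd (hgeo : GeodesicSpace Y) (hM : 0 < M) (x y : Y × ℝ)
    (hx : inXM M x) (hy : inXM M y) : dLen M x y = Fd M x y := by
  obtain ⟨γ, hcont, hin, hγ0, hγF, hadd⟩ := tent_path hgeo hM x y hx hy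
  have hF0 : 0 ≤ Fd M x y := Fd_nonneg hx hy hM
  have hup : lengthOn (BS (Y := Y)) γ (Icc 0 (Fd M x y)) ≤ ENNReal.ofReal (Fd M x y) := by
    apply iSup_le
    rintro ⟨n, u, humono, humem⟩
    calc ∑ i ∈ Finset.range n, ENNReal.ofReal (BS (γ (u i)) (γ (u (i+1))))
        ≤ ∑ i ∈ Finset.range n, ENNReal.ofReal (u (i+1) - u i) := by
          apply Finset.sum_le_sum
          intro i _
          apply ENNReal.ofReal_le_ofReal
          calc BS (γ (u i)) (γ (u (i+1))) ≤ Fd M (γ (u i)) (γ (u (i+1))) :=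
                BS_le_Fd (hin _) (hin _) hM
            _ = u (i+1) - u i :=
                hadd (u i) (humem i).1 (u (i+1)) (humono (Nat.le_succ i)) (humem (i+1)).2
      _ = ENNReal.ofReal (∑ i ∈ Finset.range n, (u (i+1) - u i)) := by
          rw [ENNReal.ofReal_sum_of_nonneg]
          intro i _
          linarith [humono (Nat.le_succ i)]
      _ = ENNReal.ofReal (u n - u 0) := by rw [Finset.sum_range_sub]
      _ ≤ ENNReal.ofReal (Fd M x y) := by
          apply ENNReal.ofReal_le_ofReal
          linarith [(humem n).2, (humem 0).1]
  have hmemS : lengthOn (BS (Y := Y)) γ (Icc 0 (Fd M x y)) ∈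
      {L : ENNReal | ∃ (a b : ℝ) (γ' : ℝ → Y × ℝ), a ≤ b ∧
        ContinuousOn γ' (Icc a b) ∧ γ' a = x ∧ γ' b = y ∧
        (∀ t ∈ Icc a b, inXM M (γ' t)) ∧
        lengthOn (BS (Y := Y)) γ' (Icc a b) = L} :=
    ⟨0, Fd M x y, γ, hF0, hcont.continuousOn, hγ0, hγF, fun t _ => hin t, rfl⟩
  have hsinf : sInf {L : ENNReal | ∃ (a b : ℝ) (γ' : ℝ → Y × ℝ), a ≤ b ∧
      ContinuousOn γ' (Icc a b) ∧ γ' a = x ∧ γ' b = y ∧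
      (∀ t ∈ Icc a b, inXM M (γ' t)) ∧
      lengthOn (BS (Y := Y)) γ' (Icc a b) = L} = ENNReal.ofReal (Fd M x y) := by
    apply le_antisymm
    · exact le_trans (sInf_le hmemS) hup
    · apply le_sInf
      rintro l ⟨a, b, γ', hab, hcont', ha', hb', hmem', rfl⟩
      exact length_ge hM hab hcont' ha' hb' hmem'
  rw [dLen, hsinf, ENNReal.toReal_ofReal hF0]

end Main


/-- on a compact geodesic space `Y`, the space `X_M = Y × (0, M]`
with the induced length metric is a geodesic metric space. -/
theorem stmt4 {Y : Type*} [MetricSpace Y] [CompactSpace Y] (hgeo : GeodesicSpace Y)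
    {M : ℝ} (hM : 0 < M) :
    ∀ x y : Y × ℝ, inXM M x → inXM M y →
      ∃ γ : ℝ → Y × ℝ,
        (∀ t ∈ Icc (0:ℝ) (dLen M x y), inXM M (γ t)) ∧
        γ 0 = x ∧ γ (dLen M x y) = y ∧
        ∀ s ∈ Icc (0:ℝ) (dLen M x y), ∀ t ∈ Icc (0:ℝ) (dLen M x y),
          dLen M (γ s) (γ t) = |s - t| := by
  intro x y hx hy
  obtain ⟨γ, hcont, hin, hγ0, hγF, hadd⟩ := tent_path hgeo hM x y hx hy
  have hdxy : dLen M x y = Fd M x y := dLen_eq_Fd hgeo hM x y hx hy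
  refine ⟨γ, fun t _ => hin t, hγ0, by rw [hdxy]; exact hγF, ?_⟩
  intro u hu v hv
  rw [hdxy] at hu hv
  rw [dLen_eq_Fd hgeo hM _ _ (hin u) (hin v)]
  rcases le_total u v with hc | hc
  · rw [hadd u hu.1 v hc hv.2, abs_sub_comm]
    exact (abs_of_nonneg (by linarith)).symm
  · rw [Fd_comm, hadd v hv.1 u hc hu.2]
    exact (abs_of_nonneg (by linarith)).symm
end

section
/- Let (Y, d_Y) be a compact geodesic metric space and M > 0. Let d_ℓ be the induced length metric on X_M = Y × (0, M] associated to the Balogh–Schramm distance ρ. Then (X_M, d_ℓ) is hyperbolic in the sense of Gromov: there exists δ ≥ 0 such that for all x,y,z,t ∈ X_M, d_ℓ(x,y) + d_ℓ(z,t) ≤ max(d_ℓ(x,z) + d_ℓ(y,t), d_ℓ(x,t) + d_ℓ(y,z)) + 2δ. -/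
open Set

namespace BSAux

variable {Y : Type*} [MetricSpace Y]

theorem sqrt_le_max {s t : ℝ} (hs : 0 < s) (ht : 0 < t) :
    Real.sqrt (s * t) ≤ max s t := by
  have h : s * t ≤ (max s t) ^ 2 := by
    rcases le_total s t with h | h
    · rw [max_eq_right h]; nlinarith
    · rw [max_eq_left h]; nlinarith
  calc Real.sqrt (s * t) ≤ Real.sqrt ((max s t) ^ 2) := Real.sqrt_le_sqrt h
    _ = max s t := Real.sqrt_sq (le_trans hs.le (le_max_left s t))

theorem Q_pos {x y : Y × ℝ} (hx : 0 < x.2) (hy : 0 < y.2) :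
    0 < dist x.1 y.1 + max x.2 y.2 :=
  add_pos_of_nonneg_of_pos dist_nonneg (lt_of_lt_of_le hx (le_max_left _ _))

theorem one_le_arg {x y : Y × ℝ} (hx : 0 < x.2) (hy : 0 < y.2) :
    1 ≤ (dist x.1 y.1 + max x.2 y.2) / Real.sqrt (x.2 * y.2) := by
  rw [le_div_iff₀ (Real.sqrt_pos.2 (mul_pos hx hy))]
  have := sqrt_le_max hx hy
  have := dist_nonneg (x := x.1) (y := y.1)
  linarith

theorem BS_nonneg {x y : Y × ℝ} (hx : 0 < x.2) (hy : 0 < y.2) : 0 ≤ BS x y := by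
  have := Real.log_nonneg (one_le_arg hx hy)
  unfold BS; linarith

theorem BS_symm (x y : Y × ℝ) : BS x y = BS y x := by
  unfold BS; rw [dist_comm, max_comm, mul_comm x.2 y.2]

theorem BS_log {x y : Y × ℝ} (hx : 0 < x.2) (hy : 0 < y.2) :
    BS x y = 2 * Real.log (dist x.1 y.1 + max x.2 y.2) - Real.log x.2 - Real.log y.2 := by
  unfold BS
  rw [Real.log_div (Q_pos hx hy).ne' (Real.sqrt_pos.2 (mul_pos hx hy)).ne',
    Real.log_sqrt (mul_pos hx hy).le, Real.log_mul hx.ne' hy.ne']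
  ring

theorem BS_self {x : Y × ℝ} (hx : 0 < x.2) : BS x x = 0 := by
  rw [BS_log hx hx, dist_self, max_self, zero_add]; ring

theorem BS_triangle {x y z : Y × ℝ} (hx : 0 < x.2) (hy : 0 < y.2) (hz : 0 < z.2) :
    BS x z ≤ BS x y + BS y z := by
  rw [BS_log hx hz, BS_log hx hy, BS_log hy hz]
  have hQxz := Q_pos (x := x) (y := z) hx hz
  have hQxy := Q_pos (x := x) (y := y) hx hy
  have hQyz := Q_pos (x := y) (y := z) hy hz
  have key : (dist x.1 z.1 + max x.2 z.2) * y.2 ≤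
      (dist x.1 y.1 + max x.2 y.2) * (dist y.1 z.1 + max y.2 z.2) := by
    have h1 := dist_triangle x.1 y.1 z.1
    have h2 : y.2 * max x.2 z.2 ≤ max x.2 y.2 * max y.2 z.2 := by
      rcases le_total x.2 z.2 with h | h
      · rw [max_eq_right h]
        exact mul_le_mul (le_max_right _ _) (le_max_right _ _) hz.le (le_trans hx.le (le_max_left _ _))
      · rw [max_eq_left h]
        rw [mul_comm]
        exact mul_le_mul (le_max_left _ _) (le_max_left _ _) hy.le (le_trans hx.le (le_max_left _ _))
    have h3 : y.2 ≤ max x.2 y.2 := le_max_right _ _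
    have h4 : y.2 ≤ max y.2 z.2 := le_max_left _ _
    nlinarith [dist_nonneg (x := x.1) (y := y.1), dist_nonneg (x := y.1) (y := z.1), hy.le]
  have hk := Real.log_le_log (by positivity) key
  rw [Real.log_mul hQxz.ne' hy.ne', Real.log_mul hQxy.ne' hQyz.ne'] at hk
  linarith

end BSAux

namespace BSAux

theorem core {n m a b c e : ℝ} (hn : 0 ≤ n) (hm : 0 ≤ m)
    (hb : 0 < b) (hc : 0 < c) (he : 0 < e)
    (h1 : n ≤ a + e) (h2 : n ≤ c + b) (h4 : m ≤ a + c) (h5 : m ≤ e + b)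
    (h6 : e ≤ b + m) (hab : c * e ≤ a * b) (hba : b ≤ a) :
    n * m ≤ 8 * (a * b) := by
  rcases le_total e b with heb | hbe
  · -- n ≤ a+e ≤ 2a, m ≤ e+b ≤ 2b
    have hn' : n ≤ 2 * a := by linarith
    have hm' : m ≤ 2 * b := by linarith
    nlinarith
  · have hca : c ≤ a := by nlinarith
    rcases le_total n (4 * b) with hn4 | h4n
    · have hm' : m ≤ 2 * a := by linarith
      nlinarith
    · -- n*m ≤ (c+b)(e+b), e ≤ b+m, b ≤ n/4
      have key : n * m ≤ (c + b) * (e + b) := by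
        apply mul_le_mul h2 h5 hm (by linarith)
      have hb4 : 4 * b ≤ n := h4n
      nlinarith
  
theorem quad {n m a b c e : ℝ} (hn : 0 ≤ n) (hm : 0 ≤ m)
    (ha : 0 < a) (hb : 0 < b) (hc : 0 < c) (he : 0 < e)
    (h1 : n ≤ a + e) (h2 : n ≤ c + b) (h3 : m ≤ a + c) (h4 : m ≤ e + b)
    (h5 : e ≤ b + m) (h6 : a ≤ c + m) (h7 : c ≤ a + m) (h8 : b ≤ e + m) :
    n * m ≤ 8 * max (a * b) (c * e) := by
  rcases le_total (c * e) (a * b) with hce | hce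
  · rw [max_eq_left hce]
    rcases le_total b a with hba | hba
    · exact core hn hm hb hc he h1 h2 h3 h4 h5 hce hba
    · have := core hn hm ha he hc (by linarith : n ≤ b + c) (by linarith : n ≤ e + a)
        (by linarith : m ≤ b + e) (by linarith : m ≤ c + a) h7 (by linarith : e * c ≤ b * a) hba
      linarith [this]
  · rw [max_eq_right hce]
    rcases le_total c e with hec | hec
    · have := core hn hm hc hb ha (by linarith : n ≤ e + a) (by linarith : n ≤ b + c)
        (by linarith : m ≤ e + b) (by linarith : m ≤ a + c) h6 (by linarith : b * a ≤ e * c) hec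
      linarith [this]
    · have := core hn hm he ha hb (by linarith : n ≤ c + b) (by linarith : n ≤ a + e)
        (by linarith : m ≤ c + a) (by linarith : m ≤ b + e) h8 (by linarith : a * b ≤ c * e) hec
      linarith [this]

end BSAux

open Set
namespace BSAux

variable {Y : Type*} [MetricSpace Y]

theorem Qtri (x y z : Y × ℝ) (hy : 0 < y.2) :
    dist x.1 z.1 + max x.2 z.2 ≤
      (dist x.1 y.1 + max x.2 y.2) + (dist y.1 z.1 + max y.2 z.2) := by
  have h1 := dist_triangle x.1 y.1 z.1
  have h2 : max x.2 z.2 ≤ max x.2 y.2 + max y.2 z.2 := by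
    apply max_le
    · exact le_add_of_le_of_nonneg (le_max_left _ _) (le_trans hy.le (le_max_left _ _))
    · exact le_add_of_nonneg_of_le (le_trans hy.le (le_max_right _ _)) (le_max_right _ _)
  linarith

theorem BS_four {x y z w : Y × ℝ} (hx : 0 < x.2) (hy : 0 < y.2) (hz : 0 < z.2)
    (hw : 0 < w.2) :
    BS x y + BS z w ≤ max (BS x z + BS y w) (BS x w + BS y z) + 2 * Real.log 8 := by
  set Qxy := dist x.1 y.1 + max x.2 y.2 with hQxy
  set Qzw := dist z.1 w.1 + max z.2 w.2 with hQzw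
  set Qxz := dist x.1 z.1 + max x.2 z.2 with hQxz
  set Qyw := dist y.1 w.1 + max y.2 w.2 with hQyw
  set Qxw := dist x.1 w.1 + max x.2 w.2 with hQxw
  set Qyz := dist y.1 z.1 + max y.2 z.2 with hQyz
  have pxy : 0 < Qxy := Q_pos hx hy
  have pzw : 0 < Qzw := Q_pos hz hw
  have pxz : 0 < Qxz := Q_pos hx hz
  have pyw : 0 < Qyw := Q_pos hy hw
  have pxw : 0 < Qxw := Q_pos hx hw
  have pyz : 0 < Qyz := Q_pos hy hz
  have key : Qxy * Qzw ≤ 8 * max (Qxz * Qyw) (Qxw * Qyz) := by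
    apply quad pxy.le pzw.le pxz pyw pxw pyz
    · have h := Qtri x z y hz
      rw [dist_comm z.1 y.1, max_comm z.2 y.2] at h
      linarith [h, hQxy, hQxz, hQyz]
    · have h := Qtri x w y hw
      rw [dist_comm w.1 y.1, max_comm w.2 y.2] at h
      linarith [h, hQxy, hQxw, hQyw]
    · have h := Qtri z x w hx
      rw [dist_comm z.1 x.1, max_comm z.2 x.2] at h
      linarith [h, hQzw, hQxz, hQxw]
    · have h := Qtri z y w hy
      rw [dist_comm z.1 y.1, max_comm z.2 y.2] at h
      linarith [h, hQzw, hQyz, hQyw]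
    · have h := Qtri y w z hw
      rw [dist_comm w.1 z.1, max_comm w.2 z.2] at h
      linarith [h, hQyz, hQyw, hQzw]
    · have h := Qtri x w z hw
      rw [dist_comm w.1 z.1, max_comm w.2 z.2] at h
      linarith [h, hQxz, hQxw, hQzw]
    · have h := Qtri x z w hz
      linarith [h, hQxw, hQxz, hQzw]
    · have h := Qtri y z w hz
      linarith [h, hQyw, hQyz, hQzw]
  have hlog := Real.log_le_log (by positivity) key
  rw [Real.log_mul pxy.ne' pzw.ne'] at hlog
  rw [BS_log hx hy, BS_log hz hw, BS_log hx hz, BS_log hy hw, BS_log hx hw, BS_log hy hz]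
  rw [← hQxy, ← hQzw, ← hQxz, ← hQyw, ← hQxw, ← hQyz]
  rcases le_total (Qxz * Qyw) (Qxw * Qyz) with hc | hc
  · rw [max_eq_right hc, Real.log_mul (by positivity) (by positivity),
      Real.log_mul pxw.ne' pyz.ne'] at hlog
    have hbranch : 2 * Real.log Qxw - Real.log x.2 - Real.log w.2 +
        (2 * Real.log Qyz - Real.log y.2 - Real.log z.2) ≤
        max (2 * Real.log Qxz - Real.log x.2 - Real.log z.2 +
          (2 * Real.log Qyw - Real.log y.2 - Real.log w.2))
          (2 * Real.log Qxw - Real.log x.2 - Real.log w.2 +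
          (2 * Real.log Qyz - Real.log y.2 - Real.log z.2)) := le_max_right _ _
    linarith
  · rw [max_eq_left hc, Real.log_mul (by positivity) (by positivity),
      Real.log_mul pxz.ne' pyw.ne'] at hlog
    have hbranch : 2 * Real.log Qxz - Real.log x.2 - Real.log z.2 +
        (2 * Real.log Qyw - Real.log y.2 - Real.log w.2) ≤
        max (2 * Real.log Qxz - Real.log x.2 - Real.log z.2 +
          (2 * Real.log Qyw - Real.log y.2 - Real.log w.2))
          (2 * Real.log Qxw - Real.log x.2 - Real.log w.2 +
          (2 * Real.log Qyz - Real.log y.2 - Real.log z.2)) := le_max_left _ _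
    linarith

end BSAux

open Set

/-- Type carrying the Balogh–Schramm metric. -/
structure BSp (Y : Type*) where
  base : Y
  ht : ℝ
  pos : 0 < ht

noncomputable instance BSp.pseudoMetricSpace {Y : Type*} [MetricSpace Y] :
    PseudoMetricSpace (BSp Y) where
  dist x y := BS (x.base, x.ht) (y.base, y.ht)
  dist_self x := BSAux.BS_self x.pos
  dist_comm x y := BSAux.BS_symm _ _
  dist_triangle x y z := BSAux.BS_triangle x.pos y.pos z.pos

theorem BSp.dist_def {Y : Type*} [MetricSpace Y] (x y : BSp Y) :
    dist x y = BS ((x.base, x.ht) : Y × ℝ) (y.base, y.ht) := rfl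

namespace BSAux

variable {Y : Type*} [MetricSpace Y]

/-- Lift a path in `Y × ℝ` with positive heights to `BSp Y`. -/
noncomputable def liftBS (γ : ℝ → Y × ℝ) : ℝ → BSp Y := fun u =>
  if h : 0 < (γ u).2 then ⟨(γ u).1, (γ u).2, h⟩ else ⟨(γ u).1, 1, one_pos⟩

theorem dist_liftBS {γ : ℝ → Y × ℝ} {u v : ℝ} (hu : 0 < (γ u).2) (hv : 0 < (γ v).2) :
    dist (liftBS γ u) (liftBS γ v) = BS (γ u) (γ v) := by
  rw [BSp.dist_def]
  simp only [liftBS, hu, hv, dif_pos]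

theorem lengthOn_eq {γ : ℝ → Y × ℝ} {S : Set ℝ} (hpos : ∀ t ∈ S, 0 < (γ t).2) :
    lengthOn (BS (Y := Y)) γ S = eVariationOn (liftBS γ) S := by
  unfold lengthOn eVariationOn
  apply iSup_congr
  rintro ⟨p, u, hu, hus⟩
  apply Finset.sum_congr rfl
  intro i _
  rw [edist_dist, dist_liftBS (hpos _ (hus (i+1))) (hpos _ (hus i)),
    BS_symm]

theorem evar_le {X : Type*} [PseudoMetricSpace X] (f : ℝ → X) (φ : ℝ → ℝ) {a b : ℝ}
    (hab : a ≤ b)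
    (h : ∀ u ∈ Icc a b, ∀ v ∈ Icc a b, u ≤ v → dist (f u) (f v) ≤ φ v - φ u) :
    eVariationOn f (Icc a b) ≤ ENNReal.ofReal (φ b - φ a) := by
  apply iSup_le
  rintro ⟨p, u, hu, hus⟩
  have hterm : ∀ i, dist (f (u i)) (f (u (i + 1))) ≤ φ (u (i + 1)) - φ (u i) :=
    fun i => h _ (hus i) _ (hus (i + 1)) (hu (Nat.le_succ i))
  calc
    ∑ i ∈ Finset.range p, edist (f (u (i + 1))) (f (u i))
        = ∑ i ∈ Finset.range p, ENNReal.ofReal (dist (f (u i)) (f (u (i + 1)))) := by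
          apply Finset.sum_congr rfl; intro i _; rw [edist_dist, dist_comm]
    _ ≤ ∑ i ∈ Finset.range p, ENNReal.ofReal (φ (u (i + 1)) - φ (u i)) := by
          apply Finset.sum_le_sum; intro i _
          exact ENNReal.ofReal_le_ofReal (hterm i)
    _ = ENNReal.ofReal (∑ i ∈ Finset.range p, (φ (u (i + 1)) - φ (u i))) := by
          rw [ENNReal.ofReal_sum_of_nonneg]
          intro i _
          exact le_trans dist_nonneg (hterm i)
    _ = ENNReal.ofReal (φ (u p) - φ (u 0)) := by rw [Finset.sum_range_sub (fun i => φ (u i))]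
    _ ≤ ENNReal.ofReal (φ b - φ a) := by
          apply ENNReal.ofReal_le_ofReal
          have h1 : φ (u p) ≤ φ b := by
            have := h _ (hus p) b ⟨hab, le_refl b⟩ (hus p).2
            linarith [dist_nonneg (x := f (u p)) (y := f b)]
          have h2 : φ a ≤ φ (u 0) := by
            have := h a ⟨le_refl a, hab⟩ _ (hus 0) (hus 0).1
            linarith [dist_nonneg (x := f a) (y := f (u 0))]
          linarith

end BSAux

open Set

namespace BSAux

/-- Horizontal projection parameter. -/
noncomputable def prj (u : ℝ) : ℝ := min 1 (max 0 (u - 1))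

/-- Height function of the standard path. -/
noncomputable def hgt (s t h u : ℝ) : ℝ :=
  s + (h - s) * min u 1 + (t - h) * max (u - 2) 0

theorem prj_mem (u : ℝ) : prj u ∈ Icc (0:ℝ) 1 :=
  ⟨le_min zero_le_one (le_max_left _ _), min_le_left _ _⟩

theorem prj_eq1 {u : ℝ} (hu : u ∈ Icc (0:ℝ) 1) : prj u = 0 := by
  unfold prj
  rw [max_eq_left (by linarith [hu.2] : u - 1 ≤ 0), min_eq_right zero_le_one]

theorem prj_eq2 {u : ℝ} (hu : u ∈ Icc (1:ℝ) 2) : prj u = u - 1 := by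
  unfold prj
  rw [max_eq_right (by linarith [hu.1] : 0 ≤ u - 1), min_eq_right (by linarith [hu.2])]

theorem prj_eq3 {u : ℝ} (hu : u ∈ Icc (2:ℝ) 3) : prj u = 1 := by
  unfold prj
  rw [max_eq_right (by linarith [hu.1] : 0 ≤ u - 1), min_eq_left (by linarith [hu.1])]

theorem hgt_eq1 {s t h u : ℝ} (hu : u ∈ Icc (0:ℝ) 1) : hgt s t h u = s + (h - s) * u := by
  unfold hgt
  rw [min_eq_left hu.2, max_eq_right (by linarith [hu.2] : u - 2 ≤ 0)]; ring

theorem hgt_eq2 {s t h u : ℝ} (hu : u ∈ Icc (1:ℝ) 2) : hgt s t h u = h := by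
  unfold hgt
  rw [min_eq_right hu.1, max_eq_right (by linarith [hu.2] : u - 2 ≤ 0)]; ring

theorem hgt_eq3 {s t h u : ℝ} (hu : u ∈ Icc (2:ℝ) 3) :
    hgt s t h u = h + (t - h) * (u - 2) := by
  unfold hgt
  rw [min_eq_right (by linarith [hu.1]), max_eq_left (by linarith [hu.1] : 0 ≤ u - 2)]; ring

theorem hgt_bounds {s t h u : ℝ} (hs : 0 < s) (ht : 0 < t) (hsh : s ≤ h) (hth : t ≤ h)
    (hu : u ∈ Icc (0:ℝ) 3) : 0 < hgt s t h u ∧ hgt s t h u ≤ h := by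
  rcases le_total u 2 with hc | hc
  · have hm1 : 0 ≤ min u 1 := le_min hu.1 zero_le_one
    have hm2 : min u 1 ≤ 1 := min_le_right _ _
    have : hgt s t h u = s + (h - s) * min u 1 := by
      unfold hgt
      rw [max_eq_right (by linarith : u - 2 ≤ 0)]; ring
    rw [this]
    constructor <;> nlinarith
  · have hm1 : 0 ≤ max (u - 2) 0 := le_max_right _ _
    have hm2 : max (u - 2) 0 ≤ 1 := max_le (by linarith [hu.2]) zero_le_one
    have : hgt s t h u = h + (t - h) * max (u - 2) 0 := by
      unfold hgt
      rw [min_eq_right (by linarith : 1 ≤ u)]; ring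
    rw [this]
    constructor <;> nlinarith

theorem continuous_prj : Continuous prj :=
  continuous_const.min (continuous_const.max (continuous_id.sub continuous_const))

theorem continuous_hgt (s t h : ℝ) : Continuous (hgt s t h) := by
  unfold hgt
  exact (continuous_const.add (continuous_const.mul
    (continuous_id.min continuous_const))).add
    (continuous_const.mul ((continuous_id.sub continuous_const).max continuous_const))

variable {Y : Type*} [MetricSpace Y]

theorem BS_vert {z : Y} {a b : ℝ} (ha : 0 < a) (hb : 0 < b) (hab : a ≤ b) :
    BS ((z, a) : Y × ℝ) (z, b) = Real.log b - Real.log a := by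
  rw [BS_log (x := ((z, a) : Y × ℝ)) (y := ((z, b) : Y × ℝ)) ha hb]
  simp only
  rw [dist_self, zero_add, max_eq_right hab]
  ring

theorem BS_horiz {z w : Y} {a : ℝ} (ha : 0 < a) :
    BS ((z, a) : Y × ℝ) (w, a) ≤ 2 * dist z w / a := by
  unfold BS
  simp only [max_self]
  rw [Real.sqrt_mul_self ha.le]
  have h1 : Real.log ((dist z w + a) / a) ≤ (dist z w + a) / a - 1 :=
    Real.log_le_sub_one_of_pos (by positivity)
  have h2 : (dist z w + a) / a - 1 = dist z w / a := by field_simp; ring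
  rw [h2] at h1
  calc 2 * Real.log ((dist z w + a) / a) ≤ 2 * (dist z w / a) := by linarith
    _ = 2 * dist z w / a := by ring

end BSAux

open Set

namespace BSAux

variable {Y : Type*} [MetricSpace Y]

/-- The set of lengths of admissible paths, as in `dLen`. -/
def pathSet (M : ℝ) (x y : Y × ℝ) : Set ENNReal :=
  {L : ENNReal | ∃ (a b : ℝ) (γ : ℝ → Y × ℝ), a ≤ b ∧
      ContinuousOn γ (Icc a b) ∧ γ a = x ∧ γ b = y ∧
      (∀ t ∈ Icc a b, inXM M (γ t)) ∧
      lengthOn (BS (Y := Y)) γ (Icc a b) = L}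

theorem dLen_eq (M : ℝ) (x y : Y × ℝ) : dLen M x y = (sInf (pathSet M x y)).toReal := rfl

theorem key_witness (hgeo : GeodesicSpace Y) {M : ℝ} (hM : 0 < M) {x y : Y × ℝ}
    (hx : inXM M x) (hy : inXM M y) {D : ℝ} (hD : ∀ p q : Y, dist p q ≤ D) :
    ∃ L ∈ pathSet M x y, L ≤ ENNReal.ofReal (BS x y + (2 + 2 * D / M)) := by
  obtain ⟨hs, hsM⟩ := hx
  obtain ⟨ht, htM⟩ := hy
  obtain ⟨α, hα0, hαd, hαiso⟩ := hgeo x.1 y.1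
  set d := dist x.1 y.1 with hd
  have hd0 : 0 ≤ d := dist_nonneg
  set h := min M (d + max x.2 y.2) with hh
  have hmaxpos : 0 < max x.2 y.2 := lt_of_lt_of_le hs (le_max_left _ _)
  have hh0 : 0 < h := lt_min hM (by linarith)
  have hhM : h ≤ M := min_le_left _ _
  have hmaxh : max x.2 y.2 ≤ h := le_min (max_le hsM htM) (by linarith)
  have hsh : x.2 ≤ h := le_trans (le_max_left _ _) hmaxh
  have hth : y.2 ≤ h := le_trans (le_max_right _ _) hmaxh
  have hhdm : h ≤ d + max x.2 y.2 := min_le_right _ _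
  have hD0 : 0 ≤ D := le_trans (by rw [dist_self]) (hD x.1 x.1)
  set γ : ℝ → Y × ℝ := fun u => (α (d * prj u), hgt x.2 y.2 h u) with hγ
  -- endpoint evaluations
  have hγ0 : γ 0 = x := by
    have h1 : prj 0 = 0 := prj_eq1 ⟨le_refl _, zero_le_one⟩
    have h2 : hgt x.2 y.2 h 0 = x.2 + (h - x.2) * 0 := hgt_eq1 ⟨le_refl _, zero_le_one⟩
    rw [hγ]; simp only [h1, h2, mul_zero, add_zero, hα0]
  have hγ3 : γ 3 = y := by
    have h1 : prj 3 = 1 := prj_eq3 ⟨by norm_num, le_refl _⟩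
    have h2 : hgt x.2 y.2 h 3 = h + (y.2 - h) * (3 - 2) := hgt_eq3 ⟨by norm_num, le_refl _⟩
    rw [hγ]; simp only [h1, h2, mul_one, hαd]
    norm_num
  -- heights positive and bounded
  have hbnd : ∀ u ∈ Icc (0:ℝ) 3, 0 < hgt x.2 y.2 h u ∧ hgt x.2 y.2 h u ≤ h :=
    fun u hu => hgt_bounds hs ht hsh hth hu
  have hpos3 : ∀ u ∈ Icc (0:ℝ) 3, 0 < (γ u).2 := fun u hu => (hbnd u hu).1
  -- continuity
  have hαlip : LipschitzOnWith 1 α (Icc 0 d) := by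
    apply LipschitzOnWith.of_dist_le_mul
    intro u hu v hv
    rw [hαiso u hu v hv]
    simp [Real.dist_eq]
  have hmapsto : ∀ u : ℝ, d * prj u ∈ Icc (0:ℝ) d := by
    intro u
    have := prj_mem u
    exact ⟨mul_nonneg hd0 this.1, mul_le_of_le_one_right hd0 this.2⟩
  have hc1 : ContinuousOn (fun u : ℝ => α (d * prj u)) (Icc 0 3) :=
    (hαlip.continuousOn.comp ((continuous_const.mul continuous_prj).continuousOn)
      (fun u _ => hmapsto u))
  have hγc : ContinuousOn γ (Icc 0 3) :=
    ContinuousOn.prodMk hc1 (continuous_hgt x.2 y.2 h).continuousOn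
  -- length bounds, piece by piece
  have b1 : eVariationOn (liftBS γ) (Icc 0 1) ≤
      ENNReal.ofReal (Real.log h - Real.log x.2) := by
    have := evar_le (liftBS γ) (fun u => Real.log (hgt x.2 y.2 h u)) zero_le_one ?_
    · have e0 : hgt x.2 y.2 h 0 = x.2 := by
        rw [hgt_eq1 ⟨le_refl _, zero_le_one⟩]; ring
      have e1 : hgt x.2 y.2 h 1 = h := hgt_eq2 ⟨le_refl _, one_le_two⟩
      beta_reduce at this
      rwa [e0, e1] at this
    · intro u hu v hv huv
      have hu3 : u ∈ Icc (0:ℝ) 3 := ⟨hu.1, hu.2.trans (by norm_num)⟩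
      have hv3 : v ∈ Icc (0:ℝ) 3 := ⟨hv.1, hv.2.trans (by norm_num)⟩
      rw [dist_liftBS (hpos3 u hu3) (hpos3 v hv3)]
      have egu : γ u = (α 0, hgt x.2 y.2 h u) := by
        rw [hγ]; simp only [prj_eq1 hu, mul_zero]
      have egv : γ v = (α 0, hgt x.2 y.2 h v) := by
        rw [hγ]; simp only [prj_eq1 hv, mul_zero]
      have hmono : hgt x.2 y.2 h u ≤ hgt x.2 y.2 h v := by
        rw [hgt_eq1 hu, hgt_eq1 hv]; nlinarith
      rw [egu, egv, BS_vert (hbnd u hu3).1 (hbnd v hv3).1 hmono]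
  have b2 : eVariationOn (liftBS γ) (Icc 1 2) ≤ ENNReal.ofReal (2 * d / h) := by
    have := evar_le (liftBS γ) (fun u => 2 * d / h * u) one_le_two ?_
    · beta_reduce at this
      rwa [show 2 * d / h * 2 - 2 * d / h * 1 = 2 * d / h by ring] at this
    · intro u hu v hv huv
      have hu3 : u ∈ Icc (0:ℝ) 3 := ⟨le_trans zero_le_one hu.1, hu.2.trans (by norm_num)⟩
      have hv3 : v ∈ Icc (0:ℝ) 3 := ⟨le_trans zero_le_one hv.1, hv.2.trans (by norm_num)⟩
      rw [dist_liftBS (hpos3 u hu3) (hpos3 v hv3)]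
      have egu : γ u = (α (d * (u - 1)), h) := by
        rw [hγ]; simp only [prj_eq2 hu, hgt_eq2 hu]
      have egv : γ v = (α (d * (v - 1)), h) := by
        rw [hγ]; simp only [prj_eq2 hv, hgt_eq2 hv]
      have hmem1 : d * (u - 1) ∈ Icc (0:ℝ) d :=
        ⟨mul_nonneg hd0 (by linarith [hu.1]), mul_le_of_le_one_right hd0 (by linarith [hu.2])⟩
      have hmem2 : d * (v - 1) ∈ Icc (0:ℝ) d :=
        ⟨mul_nonneg hd0 (by linarith [hv.1]), mul_le_of_le_one_right hd0 (by linarith [hv.2])⟩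
      have hdist : dist (α (d * (u - 1))) (α (d * (v - 1))) = d * (v - u) := by
        rw [hαiso _ hmem1 _ hmem2, abs_of_nonpos (by nlinarith), ]
        ring
      calc BS (γ u) (γ v) = BS ((α (d * (u - 1)), h) : Y × ℝ) (α (d * (v - 1)), h) := by
            rw [egu, egv]
        _ ≤ 2 * dist (α (d * (u - 1))) (α (d * (v - 1))) / h := BS_horiz hh0
        _ = 2 * (d * (v - u)) / h := by rw [hdist]
        _ = 2 * d / h * v - 2 * d / h * u := by ring
  have b3 : eVariationOn (liftBS γ) (Icc 2 3) ≤
      ENNReal.ofReal (Real.log h - Real.log y.2) := by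
    have := evar_le (liftBS γ) (fun u => - Real.log (hgt x.2 y.2 h u)) (by norm_num : (2:ℝ) ≤ 3) ?_
    · have e2 : hgt x.2 y.2 h 2 = h := hgt_eq2 ⟨one_le_two, le_refl _⟩
      have e3 : hgt x.2 y.2 h 3 = y.2 := by
        rw [hgt_eq3 ⟨by norm_num, le_refl (3:ℝ)⟩]; ring
      have e : - Real.log (hgt x.2 y.2 h 3) - - Real.log (hgt x.2 y.2 h 2) =
          Real.log h - Real.log y.2 := by rw [e2, e3]; ring
      beta_reduce at this
      rwa [e] at this
    · intro u hu v hv huv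
      have hu3 : u ∈ Icc (0:ℝ) 3 := ⟨le_trans (by norm_num) hu.1, hu.2⟩
      have hv3 : v ∈ Icc (0:ℝ) 3 := ⟨le_trans (by norm_num) hv.1, hv.2⟩
      rw [dist_liftBS (hpos3 u hu3) (hpos3 v hv3)]
      have egu : γ u = (α d, hgt x.2 y.2 h u) := by
        rw [hγ]; simp only [prj_eq3 hu, mul_one]
      have egv : γ v = (α d, hgt x.2 y.2 h v) := by
        rw [hγ]; simp only [prj_eq3 hv, mul_one]
      have hmono : hgt x.2 y.2 h v ≤ hgt x.2 y.2 h u := by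
        rw [hgt_eq3 hu, hgt_eq3 hv]; nlinarith
      rw [egu, egv, BS_symm, BS_vert (hbnd v hv3).1 (hbnd u hu3).1 hmono]
      beta_reduce
      linarith
  -- assemble the length bound
  have hsplit : eVariationOn (liftBS γ) (Icc 0 3) =
      eVariationOn (liftBS γ) (Icc 0 1) + eVariationOn (liftBS γ) (Icc 1 2) +
        eVariationOn (liftBS γ) (Icc 2 3) := by
    have h13 : eVariationOn (liftBS γ) (Icc 1 3) =
        eVariationOn (liftBS γ) (Icc 1 2) + eVariationOn (liftBS γ) (Icc 2 3) := by
      rw [← eVariationOn.union (liftBS γ) (isGreatest_Icc one_le_two)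
        (isLeast_Icc (by norm_num : (2:ℝ) ≤ 3)), Icc_union_Icc_eq_Icc one_le_two (by norm_num : (2:ℝ) ≤ 3)]
    rw [show (Icc (0:ℝ) 3) = Icc 0 1 ∪ Icc 1 3 from
        (Icc_union_Icc_eq_Icc zero_le_one (by norm_num : (1:ℝ) ≤ 3)).symm,
      eVariationOn.union (liftBS γ) (isGreatest_Icc zero_le_one)
        (isLeast_Icc (by norm_num : (1:ℝ) ≤ 3)), h13, add_assoc]
  have hlen : lengthOn (BS (Y := Y)) γ (Icc 0 3) = eVariationOn (liftBS γ) (Icc 0 3) :=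
    lengthOn_eq hpos3
  have hreal : Real.log h - Real.log x.2 + (2 * d / h) + (Real.log h - Real.log y.2) ≤
      BS x y + (2 + 2 * D / M) := by
    rw [BS_log hs ht]
    have l1 : Real.log h ≤ Real.log (d + max x.2 y.2) := Real.log_le_log hh0 hhdm
    have l2 : 2 * d / h ≤ 2 + 2 * D / M := by
      rcases le_total (d + max x.2 y.2) M with hc | hc
      · have he : h = d + max x.2 y.2 := min_eq_right hc
        have : d / h ≤ 1 := by
          rw [div_le_one hh0, he]; linarith
        have h2DM : 0 ≤ 2 * D / M := by positivity
        calc 2 * d / h = 2 * (d / h) := by ring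
          _ ≤ 2 * 1 := by linarith
          _ ≤ 2 + 2 * D / M := by linarith
      · have he : h = M := min_eq_left hc
        have hdD : d / M ≤ D / M := by gcongr; exact hD x.1 y.1
        have hDM : 0 ≤ D / M := div_nonneg hD0 hM.le
        rw [he]
        calc 2 * d / M = 2 * (d / M) := by ring
          _ ≤ 2 * (D / M) := by linarith
          _ = 2 * D / M := by ring
          _ ≤ 2 + 2 * D / M := by linarith
    linarith
  have hnn1 : 0 ≤ Real.log h - Real.log x.2 :=
    sub_nonneg.2 (Real.log_le_log hs hsh)
  have hnn2 : 0 ≤ 2 * d / h := by positivity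
  have hnn3 : 0 ≤ Real.log h - Real.log y.2 :=
    sub_nonneg.2 (Real.log_le_log ht hth)
  refine ⟨lengthOn (BS (Y := Y)) γ (Icc 0 3), ?_, ?_⟩
  · exact ⟨0, 3, γ, by norm_num, hγc, hγ0, hγ3,
      fun u hu => ⟨(hbnd u hu).1, (hbnd u hu).2.trans hhM⟩, rfl⟩
  · calc lengthOn (BS (Y := Y)) γ (Icc 0 3)
        = eVariationOn (liftBS γ) (Icc 0 1) + eVariationOn (liftBS γ) (Icc 1 2) +
          eVariationOn (liftBS γ) (Icc 2 3) := by rw [hlen, hsplit]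
      _ ≤ ENNReal.ofReal (Real.log h - Real.log x.2) + ENNReal.ofReal (2 * d / h) +
          ENNReal.ofReal (Real.log h - Real.log y.2) :=
            add_le_add (add_le_add b1 b2) b3
      _ = ENNReal.ofReal (Real.log h - Real.log x.2 + (2 * d / h) +
          (Real.log h - Real.log y.2)) := by
            rw [← ENNReal.ofReal_add hnn1 hnn2, ← ENNReal.ofReal_add (by linarith) hnn3]
      _ ≤ ENNReal.ofReal (BS x y + (2 + 2 * D / M)) := ENNReal.ofReal_le_ofReal hreal

end BSAux

open Set

namespace BSAux

variable {Y : Type*} [MetricSpace Y]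

theorem dLen_le_BS (hgeo : GeodesicSpace Y) {M : ℝ} (hM : 0 < M) {x y : Y × ℝ}
    (hx : inXM M x) (hy : inXM M y) {D : ℝ} (hD : ∀ p q : Y, dist p q ≤ D) :
    dLen M x y ≤ BS x y + (2 + 2 * D / M) := by
  obtain ⟨L, hmem, hle⟩ := key_witness hgeo hM hx hy hD
  have hD0 : 0 ≤ D := le_trans (by rw [dist_self]) (hD x.1 x.1)
  have h1 : sInf (pathSet M x y) ≤ ENNReal.ofReal (BS x y + (2 + 2 * D / M)) :=
    le_trans (sInf_le hmem) hle
  rw [dLen_eq]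
  have hBS := BS_nonneg hx.1 hy.1
  exact ENNReal.toReal_le_of_le_ofReal (by positivity) h1

theorem BS_le_dLen (hgeo : GeodesicSpace Y) {M : ℝ} (hM : 0 < M) {x y : Y × ℝ}
    (hx : inXM M x) (hy : inXM M y) {D : ℝ} (hD : ∀ p q : Y, dist p q ≤ D) :
    BS x y ≤ dLen M x y := by
  obtain ⟨L, hmem, hle⟩ := key_witness hgeo hM hx hy hD
  have hfin : sInf (pathSet M x y) ≠ ⊤ :=
    ne_top_of_le_ne_top ENNReal.ofReal_ne_top (le_trans (sInf_le hmem) hle)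
  have hlb : ENNReal.ofReal (BS x y) ≤ sInf (pathSet M x y) := by
    apply le_sInf
    rintro L' ⟨a, b, γ, hab, hcont, hγa, hγb, hmemXM, hL⟩
    rw [← hL]
    have humono : Monotone (fun i : ℕ => if i = 0 then a else b) := by
      intro i j hij
      dsimp only
      split_ifs with hi hj hj
      · exact le_refl a
      · exact hab
      · omega
      · exact le_refl b
    have humem : ∀ i : ℕ, (if i = 0 then a else b) ∈ Icc a b := by
      intro i; split_ifs
      · exact ⟨le_refl a, hab⟩
      · exact ⟨hab, le_refl b⟩
    have := le_iSup (fun p : ℕ × { u : ℕ → ℝ // Monotone u ∧ ∀ i, u i ∈ Icc a b } =>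
        ∑ i ∈ Finset.range p.1, ENNReal.ofReal (BS (γ (p.2.1 i)) (γ (p.2.1 (i + 1)))))
      (⟨1, ⟨fun i : ℕ => if i = 0 then a else b, humono, humem⟩⟩)
    unfold lengthOn
    refine le_trans (le_of_eq ?_) this
    rw [Finset.sum_range_one]
    norm_num [hγa, hγb]
  rw [dLen_eq]
  calc BS x y = (ENNReal.ofReal (BS x y)).toReal :=
        (ENNReal.toReal_ofReal (BS_nonneg hx.1 hy.1)).symm
    _ ≤ (sInf (pathSet M x y)).toReal := ENNReal.toReal_mono hfin hlb

end BSAux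


/-- on a compact geodesic space `Y`, the space `X_M = Y × (0, M]`
with the induced length metric is hyperbolic in the sense of Gromov. -/
theorem stmt5 {Y : Type*} [MetricSpace Y] [CompactSpace Y] (hgeo : GeodesicSpace Y)
    {M : ℝ} (hM : 0 < M) :
    ∃ δ : ℝ, 0 ≤ δ ∧ ∀ x y z t : Y × ℝ, inXM M x → inXM M y → inXM M z → inXM M t →
      dLen M x y + dLen M z t ≤
        max (dLen M x z + dLen M y t) (dLen M x t + dLen M y z) + 2 * δ := by
  -- a bound on the diameter of Y
  obtain ⟨D₀, hD₀⟩ := Metric.isBounded_iff.1 (isCompact_univ (X := Y)).isBounded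
  set D : ℝ := max D₀ 0 with hDdef
  have hD : ∀ p q : Y, dist p q ≤ D :=
    fun p q => le_trans (hD₀ (mem_univ p) (mem_univ q)) (le_max_left _ _)
  have hD0 : 0 ≤ D := le_max_right _ _
  clear_value D
  set C : ℝ := 2 + 2 * D / M with hCdef
  have hC0 : 0 ≤ C := by positivity
  clear_value C
  refine ⟨Real.log 8 + C, by positivity, ?_⟩
  intro x y z t hx hy hz ht
  have h1 := BSAux.dLen_le_BS hgeo hM hx hy hD
  have h2 := BSAux.dLen_le_BS hgeo hM hz ht hD
  have h3 := BSAux.BS_le_dLen hgeo hM hx hz hD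
  have h4 := BSAux.BS_le_dLen hgeo hM hy ht hD
  have h5 := BSAux.BS_le_dLen hgeo hM hx ht hD
  have h6 := BSAux.BS_le_dLen hgeo hM hy hz hD
  have hfour := BSAux.BS_four hx.1 hy.1 hz.1 ht.1
  have hmax : max (BS x z + BS y t) (BS x t + BS y z) ≤
      max (dLen M x z + dLen M y t) (dLen M x t + dLen M y z) :=
    max_le_max (add_le_add h3 h4) (add_le_add h5 h6)
  calc dLen M x y + dLen M z t ≤ BS x y + BS z t + 2 * C := by linarith
    _ ≤ max (BS x z + BS y t) (BS x t + BS y z) + 2 * Real.log 8 + 2 * C := by linarith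
    _ ≤ max (dLen M x z + dLen M y t) (dLen M x t + dLen M y z) + 2 * (Real.log 8 + C) := by
        linarith
end
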